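/- Let f be a character on X, let N be a rooted binary level-k phylogenetic network on X, and let S and S' be embeddings of two phylogenetic X-trees displayed by N such that PS_sw(f,N)=PS(f,S'). Then PS(f,S) ≤ PS(f,S') + k·b(f,N,S'). -/

import Mathlib

noncomputable section
attribute [local instance] Classical.propDecidable

/-! ### Directed graphs -/

structure Dgraph (V : Type) where
  verts : Finset V
  edges : Finset (V × V)
  edges_sub : ∀ e ∈ edges, e.1 ∈ verts ∧ e.2 ∈ verts

namespace Dgraph

variable {V : Type}

def edgeRel (G : Dgraph V) (u v : V) : Prop := (u, v) ∈ G.edges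

def inDeg (G : Dgraph V) (v : V) : ℕ := (G.edges.filter (fun e => e.2 = v)).card

def outDeg (G : Dgraph V) (v : V) : ℕ := (G.edges.filter (fun e => e.1 = v)).card

def Reaches (G : Dgraph V) (u v : V) : Prop := Relation.ReflTransGen G.edgeRel u v

def Acyclic (G : Dgraph V) : Prop := ∀ u v, G.edgeRel u v → ¬ G.Reaches v u

def leaves (G : Dgraph V) : Finset V := G.verts.filter (fun v => G.outDeg v = 0)

def IsSubgraph (H G : Dgraph V) : Prop := H.verts ⊆ G.verts ∧ H.edges ⊆ G.edges

def adj (G : Dgraph V) (u v : V) : Prop := (u, v) ∈ G.edges ∨ (v, u) ∈ G.edges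

def Connected (G : Dgraph V) : Prop :=
  ∀ u ∈ G.verts, ∀ v ∈ G.verts, Relation.ReflTransGen G.adj u v

def deleteVert (G : Dgraph V) (x : V) : Dgraph V where
  verts := G.verts.erase x
  edges := G.edges.filter (fun e => e.1 ≠ x ∧ e.2 ≠ x)
  edges_sub := by
    intro e he
    simp only [Finset.mem_filter] at he
    obtain ⟨he1, hx1, hx2⟩ := he
    exact ⟨Finset.mem_erase.mpr ⟨hx1, (G.edges_sub e he1).1⟩,
           Finset.mem_erase.mpr ⟨hx2, (G.edges_sub e he1).2⟩⟩

/-- A graph is biconnected if it is connected and cannot be disconnected by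
deleting exactly one of its vertices. -/
def Biconnected (G : Dgraph V) : Prop :=
  G.Connected ∧ ∀ x ∈ G.verts, (G.deleteVert x).Connected

/-- A biconnected component: a maximal biconnected subgraph. -/
def IsBicomp (G H : Dgraph V) : Prop :=
  H.IsSubgraph G ∧ H.Biconnected ∧
  ∀ H' : Dgraph V, H'.IsSubgraph G → H'.Biconnected → H.IsSubgraph H' → H' = H

/-- One subdivision step: replace an edge `(u,w)` by `(u,v)`, `(v,w)` for a new vertex `v`. -/
def SubdivStep (G G' : Dgraph V) : Prop :=
  ∃ u w v, (u, w) ∈ G.edges ∧ v ∉ G.verts ∧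
    G'.verts = insert v G.verts ∧
    G'.edges = insert (u, v) (insert (v, w) (G.edges.erase (u, w)))

/-- `S.IsSubdivisionOf G` : `S` can be obtained from `G` by repeatedly subdividing edges
(`G` is a subdivision of itself). -/
def IsSubdivisionOf (S G : Dgraph V) : Prop := Relation.ReflTransGen SubdivStep G S

end Dgraph

/-! ### Rooted binary phylogenetic networks -/

structure PhyloNet (V : Type) (X : Finset V) where
  G : Dgraph V
  root : V
  root_mem : root ∈ G.verts
  root_inDeg : G.inDeg root = 0
  root_outDeg : G.outDeg root = 1
  acyclic : G.Acyclic
  reach : ∀ v ∈ G.verts, G.Reaches root v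
  degrees : ∀ v ∈ G.verts, v ≠ root →
      (G.inDeg v = 1 ∧ G.outDeg v = 2) ∨ (G.inDeg v = 2 ∧ G.outDeg v = 1) ∨
      (G.inDeg v = 1 ∧ G.outDeg v = 0)
  leaves_eq : G.leaves = X
  Xnonempty : X.Nonempty

namespace PhyloNet

variable {V : Type} {X : Finset V}

def IsRetic (N : PhyloNet V X) (v : V) : Prop := N.G.inDeg v = 2

/-- A rooted binary phylogenetic `X`-tree: a network with no reticulations. -/
def IsTreeNet (N : PhyloNet V X) : Prop := ∀ v ∈ N.G.verts, N.G.inDeg v ≤ 1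

/-- `S` is an embedding of `T` in `N`: a subgraph of `N` containing the root of `N`
that is a subdivision of `T`. -/
def IsEmbedding (N : PhyloNet V X) (T : PhyloNet V X) (S : Dgraph V) : Prop :=
  S.IsSubgraph N.G ∧ N.root ∈ S.verts ∧ S.IsSubdivisionOf T.G

/-- `T` is displayed by `N`. -/
def Displays (N T : PhyloNet V X) : Prop :=
  T.IsTreeNet ∧ ∃ S : Dgraph V, N.IsEmbedding T S

/-- A blob of `N`: a biconnected component with at least one reticulation. -/
def IsBlob (N : PhyloNet V X) (B : Dgraph V) : Prop :=
  Dgraph.IsBicomp N.G B ∧ ∃ v ∈ B.verts, N.IsRetic v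

/-- `N` is level-`k`: every biconnected component has at most `k` reticulations. -/
def IsLevel (N : PhyloNet V X) (k : ℕ) : Prop :=
  ∀ H : Dgraph V, Dgraph.IsBicomp N.G H →
    (H.verts.filter (fun v => N.IsRetic v)).card ≤ k

def numRetic (N : PhyloNet V X) : ℕ := (N.G.verts.filter (fun v => N.IsRetic v)).card

/-- Children of a blob `B`: vertices outside `B` that are children of vertices of `B`. -/
def blobChildren (N : PhyloNet V X) (B : Dgraph V) : Finset V :=
  N.G.verts.filter (fun v => v ∉ B.verts ∧ ∃ u ∈ B.verts, (u, v) ∈ N.G.edges)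

/-- Cluster of a vertex: its set of descendant leaves. -/
def cl (N : PhyloNet V X) (v : V) : Finset V := X.filter (fun x => N.G.Reaches v x)

end PhyloNet

/-- Source of a blob: its unique vertex of in-degree zero and out-degree two within the blob. -/
def IsSource {V : Type} (B : Dgraph V) (s : V) : Prop :=
  s ∈ B.verts ∧ B.inDeg s = 0 ∧ B.outDeg s = 2

/-! ### Characters and parsimony -/

/-- A character on `X`: a function that is surjective from `X` onto the set `C` of states. -/
def IsCharacter {V C : Type} (X : Finset V) (f : V → C) : Prop :=
  ∀ c : C, ∃ x ∈ X, f x = c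

/-- An extension of a character `f` (agrees with `f` on the leaves `X`). -/
def IsExtension {V C : Type} (X : Finset V) (f F : V → C) : Prop :=
  ∀ x ∈ X, F x = f x

/-- Changing number of an assignment `F` on a digraph. -/
def ch {V C : Type} (F : V → C) (G : Dgraph V) : ℕ :=
  (G.edges.filter (fun e => F e.1 ≠ F e.2)).card

/-- Parsimony score of `f` on `G` (leaves `X`). -/
def PS {V C : Type} (X : Finset V) (f : V → C) (G : Dgraph V) : ℕ :=
  sInf {n | ∃ F : V → C, IsExtension X f F ∧ ch F G = n}

/-- Softwired parsimony score of a single character on a network. -/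
def PSsw {V C : Type} {X : Finset V} (N : PhyloNet V X) (f : V → C) : ℕ :=
  sInf {n | ∃ T : PhyloNet V X, N.Displays T ∧ PS X f T.G = n}

/-! ### Switchings -/

def reticEdges {V : Type} {X : Finset V} (N : PhyloNet V X) : Finset (V × V) :=
  N.G.edges.filter (fun e => N.G.inDeg e.2 = 2)

def IsSwitching {V : Type} {X : Finset V} (N : PhyloNet V X) (R : Finset (V × V)) : Prop :=
  R ⊆ reticEdges N ∧
  ∀ v ∈ N.G.verts, N.IsRetic v → (R.filter (fun e => e.2 = v)).card = 1

def switchGraph {V : Type} {X : Finset V} (N : PhyloNet V X) (R : Finset (V × V)) : Dgraph V where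
  verts := N.G.verts
  edges := N.G.edges \ (reticEdges N \ R)
  edges_sub := by
    intro e he
    exact N.G.edges_sub e (Finset.mem_sdiff.mp he).1

/-- Suppressing a vertex of in-degree one and out-degree one. -/
def SuppressStep {V : Type} (G G' : Dgraph V) : Prop :=
  ∃ u v w, (u, v) ∈ G.edges ∧ (v, w) ∈ G.edges ∧ G.inDeg v = 1 ∧ G.outDeg v = 1 ∧
    u ≠ v ∧ w ≠ v ∧
    G'.verts = G.verts.erase v ∧
    G'.edges = insert (u, w) ((G.edges.erase (u, v)).erase (v, w))

/-- Deleting a vertex of out-degree zero that is not a leaf in `X`. -/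
def DeleteLeafStep {V : Type} (X : Finset V) (G G' : Dgraph V) : Prop :=
  ∃ v ∈ G.verts, v ∉ X ∧ G.outDeg v = 0 ∧
    G'.verts = G.verts.erase v ∧
    G'.edges = G.edges.filter (fun e => e.2 ≠ v)

def CleanupStep {V : Type} (X : Finset V) (G G' : Dgraph V) : Prop :=
  SuppressStep G G' ∨ DeleteLeafStep X G G'

/-- The switching `R` yields the phylogenetic tree `T`. -/
def Yields {V : Type} {X : Finset V} (N : PhyloNet V X) (R : Finset (V × V))
    (T : PhyloNet V X) : Prop :=
  T.IsTreeNet ∧ Relation.ReflTransGen (CleanupStep X) (switchGraph N R) T.G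

/-- Switching distance `h(N) - |R ∩ R'|`. -/
def switchDist {V : Type} {X : Finset V} (N : PhyloNet V X) (R R' : Finset (V × V)) : ℕ :=
  N.numRetic - (R ∩ R').card

/-! ### rSPR -/

def relPow {α : Type} (r : α → α → Prop) : ℕ → α → α → Prop
  | 0, a, b => a = b
  | n + 1, a, b => ∃ c, r a c ∧ relPow r n c b

/-- A single rooted subtree prune and regraft operation. -/
def rSPRStep {V : Type} {X : Finset V} (T T' : PhyloNet V X) : Prop :=
  ∃ u v p c a b u',
    (u, v) ∈ T.G.edges ∧ u ≠ T.root ∧ v ≠ T.root ∧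
    (p, u) ∈ T.G.edges ∧ (u, c) ∈ T.G.edges ∧ c ≠ v ∧
    (a, b) ∈ insert (p, c) (((T.G.edges.erase (u, v)).erase (p, u)).erase (u, c)) ∧
    ¬ T.G.Reaches v a ∧ ¬ T.G.Reaches v b ∧
    u' ∉ T.G.verts.erase u ∧
    T'.root = T.root ∧
    T'.G.verts = insert u' (T.G.verts.erase u) ∧
    T'.G.edges = insert (a, u') (insert (u', b) (insert (u', v)
      ((insert (p, c) (((T.G.edges.erase (u, v)).erase (p, u)).erase (u, c))).erase (a, b))))

/-- rSPR distance: minimum number of rSPR operations transforming `T` into `T'`. -/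
def rSPRdist {V : Type} {X : Finset V} (T T' : PhyloNet V X) : ℕ :=
  sInf {n | relPow rSPRStep n T T'}

/-! ### Root paths -/

/-- `(u,v)` is an edge of the root path of `G` (with root `r`). -/
def rootPathEdge {V : Type} (G : Dgraph V) (r u v : V) : Prop :=
  (u, v) ∈ G.edges ∧ G.outDeg u = 1 ∧
  Relation.ReflTransGen (fun a b => (a, b) ∈ G.edges ∧ G.outDeg a = 1) r u

/-- `F` has no character-state transition on any edge of the root path. -/
def NoRootPathChange {V C : Type} (G : Dgraph V) (r : V) (F : V → C) : Prop :=
  ∀ u v, rootPathEdge G r u v → F u = F v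

/-! ### Informative blobs -/

/-- `ind(F,B,S) = 0`: `F` assigns the same state to all children of the blob `B`. -/
def SameOnChildren {V C : Type} {X : Finset V} (N : PhyloNet V X) (B : Dgraph V)
    (F : V → C) : Prop :=
  ∀ a ∈ N.blobChildren B, ∀ b ∈ N.blobChildren B, F a = F b

/-- The number of blobs `B` of `N` with `ind(F,B,S) = 1`. -/
def infBlobCount {V C : Type} {X : Finset V} (N : PhyloNet V X) (F : V → C) : ℕ :=
  Set.ncard {B : Dgraph V | N.IsBlob B ∧ ¬ SameOnChildren N B F}

/-- `b(f,N,S)`: the number of informative blobs of `N` relative to `S` and `f`. -/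
def blobScore {V C : Type} {X : Finset V} (N : PhyloNet V X) (f : V → C) (S : Dgraph V) : ℕ :=
  sInf {m | ∃ F : V → C, IsExtension X f F ∧ ch F S = PS X f S ∧ infBlobCount N F = m}

/-- `F` realises `b(f,N,S)`. -/
def Realises {V C : Type} {X : Finset V} (N : PhyloNet V X) (f : V → C) (S : Dgraph V)
    (F : V → C) : Prop :=
  IsExtension X f F ∧ ch F S = PS X f S ∧ infBlobCount N F = blobScore N f S

/-- A blob `B` is non-informative relative to `S` and `f`. -/
def NonInformative {V C : Type} {X : Finset V} (N : PhyloNet V X) (B S : Dgraph V)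
    (f : V → C) : Prop :=
  ∃ F : V → C, IsExtension X f F ∧ ch F S = PS X f S ∧ SameOnChildren N B F

/-! ### Blob reduction / cluster tree pairs -/

/-- Longest-path distance from the root. -/
def distFromRoot {V : Type} {X : Finset V} (N : PhyloNet V X) (v : V) : ℕ :=
  sSup {n | relPow N.G.edgeRel n N.root v}

/-- The subgraph of `S` rooted at `s`. -/
def subAt {V : Type} (S : Dgraph V) (s : V) : Dgraph V where
  verts := insert s (S.verts.filter (fun v => S.Reaches s v))
  edges := S.edges.filter (fun e => S.Reaches s e.1)
  edges_sub := by
    intro e he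
    simp only [Finset.mem_filter] at he
    obtain ⟨he1, hr⟩ := he
    refine ⟨Finset.mem_insert.mpr (Or.inr (Finset.mem_filter.mpr ⟨(S.edges_sub e he1).1, hr⟩)),
      Finset.mem_insert.mpr (Or.inr (Finset.mem_filter.mpr ⟨(S.edges_sub e he1).2, ?_⟩))⟩
    exact hr.tail (show S.edgeRel e.1 e.2 from he1)

/-- `S(Y)`: the subtree of `S` rooted at `s` together with a new root `ρY` and edge `(ρY, s)`. -/
def clusterY {V : Type} (S : Dgraph V) (s ρY : V) : Dgraph V where
  verts := insert ρY (subAt S s).verts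
  edges := insert (ρY, s) (subAt S s).edges
  edges_sub := by
    intro e he
    rcases Finset.mem_insert.mp he with h | h
    · subst h
      exact ⟨Finset.mem_insert_self _ _,
        Finset.mem_insert.mpr (Or.inr (Finset.mem_insert_self _ _))⟩
    · have h2 := (subAt S s).edges_sub e h
      exact ⟨Finset.mem_insert.mpr (Or.inr h2.1), Finset.mem_insert.mpr (Or.inr h2.2)⟩

/-- `S(Ȳ)`: `S` with the subtree rooted at `s` replaced by a single new leaf `y`. -/
def clusterYbar {V : Type} (S : Dgraph V) (s y : V) : Dgraph V where
  verts := insert y (S.verts.filter (fun v => ¬ S.Reaches s v))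
  edges := (S.edges.filter (fun e => ¬ S.Reaches s e.1 ∧ ¬ S.Reaches s e.2)) ∪
           ((S.edges.filter (fun e => e.2 = s ∧ ¬ S.Reaches s e.1)).image (fun e => (e.1, y)))
  edges_sub := by
    intro e he
    rcases Finset.mem_union.mp he with h | h
    · simp only [Finset.mem_filter] at h
      exact ⟨Finset.mem_insert.mpr (Or.inr (Finset.mem_filter.mpr ⟨(S.edges_sub _ h.1).1, h.2.1⟩)),
        Finset.mem_insert.mpr (Or.inr (Finset.mem_filter.mpr ⟨(S.edges_sub _ h.1).2, h.2.2⟩))⟩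
    · simp only [Finset.mem_image, Finset.mem_filter] at h
      obtain ⟨a, ⟨ha, _, hnr⟩, hae⟩ := h
      constructor
      · rw [← hae]
        exact Finset.mem_insert.mpr (Or.inr (Finset.mem_filter.mpr ⟨(S.edges_sub _ ha).1, hnr⟩))
      · rw [← hae]
        exact Finset.mem_insert_self _ _

/-- A pair of cluster extensions with respect to `f`. -/
def ClusterExtPair {V C : Type} (X Y : Finset V) (y ρY : V) (f FY FYb : V → C) : Prop :=
  (∀ x ∈ Y, FY x = f x) ∧ (∀ x ∈ X \ Y, FYb x = f x) ∧ FYb y = FY ρY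

/-! ### Parental trees -/

/-- A vertex of `U*(N)`: a directed path in `N` starting at the root. -/
def UstarVert {V : Type} {X : Finset V} (N : PhyloNet V X) (p : List V) : Prop :=
  p ≠ [] ∧ p.head? = some N.root ∧ p.Chain' (fun a b => (a, b) ∈ N.G.edges)

/-- An edge of `U*(N)`: `q` extends `p` by one additional edge of `N`. -/
def UstarEdge {V : Type} {X : Finset V} (N : PhyloNet V X) (p q : List V) : Prop :=
  UstarVert N p ∧ UstarVert N q ∧ ∃ w, q = p ++ [w]

/-- `T` is a parental tree of `N`: obtained from a subgraph of `U*(N)` by suppressing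
in-degree-one out-degree-one vertices; its leaves are labelled bijectively by `X`
via the endpoint of the corresponding path. -/
def IsParentalTree {V : Type} {X : Finset V} (N : PhyloNet V X) {L : Finset (List V)}
    (T : PhyloNet (List V) L) : Prop :=
  T.IsTreeNet ∧
  (∀ x ∈ X, ∃! p, p ∈ L ∧ p.getLast? = some x) ∧
  (∀ p ∈ L, ∃ x ∈ X, p.getLast? = some x) ∧
  ∃ H : Dgraph (List V),
    (∀ p ∈ H.verts, UstarVert N p) ∧
    (∀ e ∈ H.edges, UstarEdge N e.1 e.2) ∧
    Relation.ReflTransGen SuppressStep H T.G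

/-- Parsimony score of a character `f` on a tree whose leaves are labelled by
elements of `X` via the last vertex of the corresponding path. -/
def PSlab {V C : Type} (L : Finset (List V)) (f : V → C) (G : Dgraph (List V)) : ℕ :=
  sInf {n | ∃ F : List V → C,
    (∀ p ∈ L, ∀ x, p.getLast? = some x → F p = f x) ∧ ch F G = n}

/-- Parental parsimony score. -/
def PSpa {V C : Type} {X : Finset V} (N : PhyloNet V X) (f : V → C) : ℕ :=
  sInf {n | ∃ (L : Finset (List V)) (T : PhyloNet (List V) L),
    IsParentalTree N T ∧ PSlab L f T.G = n}

/-! ### Undirected graphs, semi-directed networks -/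

structure UGraph (V : Type) where
  verts : Finset V
  edges : Finset (Sym2 V)
  edges_sub : ∀ e ∈ edges, ∀ v ∈ e, v ∈ verts
  no_loops : ∀ e ∈ edges, ¬ e.IsDiag

namespace UGraph

variable {V : Type}

def adj (G : UGraph V) (u v : V) : Prop := s(u, v) ∈ G.edges

def degree (G : UGraph V) (v : V) : ℕ := (G.edges.filter (fun e => v ∈ e)).card

def Connected (G : UGraph V) : Prop :=
  ∀ u ∈ G.verts, ∀ v ∈ G.verts, Relation.ReflTransGen G.adj u v

end UGraph

/-- An unrooted binary phylogenetic `X`-tree: a connected undirected acyclic graph with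
leaf set `X` whose inner vertices all have degree three. -/
structure UTree (V : Type) (X : Finset V) where
  g : UGraph V
  connected : g.Connected
  card_eq : g.verts.card = g.edges.card + 1
  leaves_eq : g.verts.filter (fun v => g.degree v = 1) = X
  degree_cases : ∀ v ∈ g.verts, g.degree v = 1 ∨ g.degree v = 3

def USubdivStep {V : Type} (G G' : UGraph V) : Prop :=
  ∃ u w v, s(u, w) ∈ G.edges ∧ v ∉ G.verts ∧
    G'.verts = insert v G.verts ∧
    G'.edges = insert s(u, v) (insert s(v, w) (G.edges.erase s(u, w)))

def IsUSubdivisionOf {V : Type} (S G : UGraph V) : Prop :=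
  Relation.ReflTransGen USubdivStep G S

/-- A binary semi-directed network: directed (reticulation) edges and undirected edges. -/
structure SemiDir (V : Type) where
  verts : Finset V
  dirE : Finset (V × V)
  undirE : Finset (Sym2 V)
  dir_sub : ∀ e ∈ dirE, e.1 ∈ verts ∧ e.2 ∈ verts
  undir_sub : ∀ e ∈ undirE, ∀ v ∈ e, v ∈ verts
  dir_noloop : ∀ e ∈ dirE, e.1 ≠ e.2
  undir_noloop : ∀ e ∈ undirE, ¬ e.IsDiag

namespace SemiDir

variable {V : Type}

/-- The underlying undirected graph. -/
def und (Ns : SemiDir V) : UGraph V where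
  verts := Ns.verts
  edges := Ns.undirE ∪ Ns.dirE.image (fun e => s(e.1, e.2))
  edges_sub := by
    intro e he v hv
    rcases Finset.mem_union.mp he with h | h
    · exact Ns.undir_sub e h v hv
    · obtain ⟨a, ha, hae⟩ := Finset.mem_image.mp h
      rw [← hae] at hv
      rcases Sym2.mem_iff.mp hv with h1 | h1
      · rw [h1]; exact (Ns.dir_sub a ha).1
      · rw [h1]; exact (Ns.dir_sub a ha).2
  no_loops := by
    intro e he
    rcases Finset.mem_union.mp he with h | h
    · exact Ns.undir_noloop e h
    · obtain ⟨a, ha, hae⟩ := Finset.mem_image.mp h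
      rw [← hae]
      simp only [Sym2.isDiag_iff_proj_eq]
      exact Ns.dir_noloop a ha

def isRetic (Ns : SemiDir V) (v : V) : Prop :=
  (Ns.dirE.filter (fun e => e.2 = v)).card = 2

/-- An unrooted phylogenetic `X`-tree is displayed by a semi-directed network. -/
def Displays {X : Finset V} (Ns : SemiDir V) (Tu : UTree V X) : Prop :=
  ∃ S : SemiDir V, S.verts ⊆ Ns.verts ∧ S.dirE ⊆ Ns.dirE ∧ S.undirE ⊆ Ns.undirE ∧
    (∀ v : V, Ns.isRetic v → (S.dirE.filter (fun e => e.2 = v)).card ≤ 1) ∧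
    IsUSubdivisionOf S.und Tu.g

end SemiDir

/-- `Nr` is a rooted partner of `Ns`: `Ns` is obtained from `Nr` by deleting the root,
suppressing the child of the root, and omitting the direction of every
non-reticulation edge. -/
def RootedPartner {V : Type} {X : Finset V} (Nr : PhyloNet V X) (Ns : SemiDir V) : Prop :=
  ∃ v w w', (Nr.root, v) ∈ Nr.G.edges ∧ (v, w) ∈ Nr.G.edges ∧ (v, w') ∈ Nr.G.edges ∧ w ≠ w' ∧
    Ns.verts = (Nr.G.verts.erase Nr.root).erase v ∧
    Ns.dirE = Nr.G.edges.filter (fun e => Nr.G.inDeg e.2 = 2 ∧ e.1 ≠ v) ∧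
    Ns.undirE = insert s(w, w')
      ((Nr.G.edges.filter (fun e => Nr.G.inDeg e.2 ≠ 2 ∧ e.1 ≠ Nr.root ∧ e.1 ≠ v)).image
        (fun e => s(e.1, e.2)))

/-- `Tu` is obtained from the rooted tree `T` by deleting the root and suppressing
its child. -/
def UnrootOf {V : Type} {X : Finset V} (T : PhyloNet V X) (Tu : UTree V X) : Prop :=
  ∃ v w w', (T.root, v) ∈ T.G.edges ∧ (v, w) ∈ T.G.edges ∧ (v, w') ∈ T.G.edges ∧ w ≠ w' ∧
    Tu.g.verts = (T.G.verts.erase T.root).erase v ∧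
    Tu.g.edges = insert s(w, w')
      ((T.G.edges.filter (fun e => e.1 ≠ T.root ∧ e.1 ≠ v)).image (fun e => s(e.1, e.2)))

/-- Changing number on an undirected graph. -/
def chU {V C : Type} (F : V → C) (G : UGraph V) : ℕ :=
  (G.edges.filter (fun e => Sym2.lift ⟨fun a b => F a ≠ F b, fun a b => propext ne_comm⟩ e)).card

/-- Parsimony score on an undirected graph with leaf set `X`. -/
def PSU {V C : Type} (X : Finset V) (f : V → C) (G : UGraph V) : ℕ :=
  sInf {n | ∃ F : V → C, IsExtension X f F ∧ chU F G = n}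

/-- Softwired parsimony score of a character on a semi-directed network. -/
def PSswU {V C : Type} (X : Finset V) (Ns : SemiDir V) (f : V → C) : ℕ :=
  sInf {n | ∃ Tu : UTree V X, Ns.Displays Tu ∧ PSU X f Tu.g = n}

section Development

open Finset

variable {V C : Type} {X : Finset V}

/-! ### Basic Dgraph lemmas -/

lemma Dgraph.ext' {G H : Dgraph V} (hv : G.verts = H.verts) (he : G.edges = H.edges) :
    G = H := by
  cases G; cases H; simp_all

lemma ch_mono (F : V → C) {H G : Dgraph V} (h : H.edges ⊆ G.edges) : ch F H ≤ ch F G :=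
  Finset.card_le_card (Finset.filter_subset_filter _ h)

lemma PS_le_ch (f F : V → C) (G : Dgraph V) (hF : IsExtension X f F) :
    PS X f G ≤ ch F G :=
  Nat.sInf_le ⟨F, hF, rfl⟩

lemma isExtension_self (f : V → C) : IsExtension X f f := fun _ _ => rfl

lemma PS_attained (f : V → C) (G : Dgraph V) :
    ∃ F : V → C, IsExtension X f F ∧ ch F G = PS X f G := by
  have hne : {n | ∃ F : V → C, IsExtension X f F ∧ ch F G = n}.Nonempty :=
    ⟨ch f G, f, isExtension_self f, rfl⟩
  exact Nat.sInf_mem hne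

lemma blobScore_attained (N : PhyloNet V X) (f : V → C) (S : Dgraph V) :
    ∃ F : V → C, IsExtension X f F ∧ ch F S = PS X f S ∧
      infBlobCount N F = blobScore N f S := by
  obtain ⟨F0, h1, h2⟩ := PS_attained (X := X) f S
  have hne : {m | ∃ F : V → C, IsExtension X f F ∧ ch F S = PS X f S ∧
      infBlobCount N F = m}.Nonempty := ⟨infBlobCount N F0, F0, h1, h2, rfl⟩
  exact Nat.sInf_mem hne

lemma inDeg_mono {H G : Dgraph V} (h : H.edges ⊆ G.edges) (v : V) :
    H.inDeg v ≤ G.inDeg v :=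
  Finset.card_le_card (Finset.filter_subset_filter _ h)

lemma ch_eq_sum (F : V → C) (G : Dgraph V) :
    ch F G = ∑ e ∈ G.edges, (if F e.1 ≠ F e.2 then 1 else 0) := by
  simp [ch, Finset.card_filter]

/-- no loops in an acyclic graph -/
lemma no_loops (N : PhyloNet V X) {v : V} (h : (v, v) ∈ N.G.edges) : False :=
  N.acyclic v v h Relation.ReflTransGen.refl

lemma no_two_cycle (N : PhyloNet V X) {u v : V} (h1 : (u, v) ∈ N.G.edges)
    (h2 : (v, u) ∈ N.G.edges) : False :=
  N.acyclic u v h1 (Relation.ReflTransGen.single h2)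

lemma reaches_trans {G : Dgraph V} {a b c : V} (h1 : G.Reaches a b) (h2 : G.Reaches b c) :
    G.Reaches a c := Relation.ReflTransGen.trans h1 h2

/-- descendants measure for well-founded recursion -/
def descCard (N : PhyloNet V X) (v : V) : ℕ :=
  (N.G.verts.filter (fun w => N.G.Reaches v w)).card

lemma descCard_lt (N : PhyloNet V X) {v w : V} (h : (v, w) ∈ N.G.edges) :
    descCard N w < descCard N v := by
  apply Finset.card_lt_card
  constructor
  · intro x hx
    simp only [Finset.mem_filter] at hx ⊢
    exact ⟨hx.1, Relation.ReflTransGen.trans (Relation.ReflTransGen.single h) hx.2⟩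
  · intro hsub
    have hv : v ∈ N.G.verts.filter (fun w' => N.G.Reaches v w') := by
      simp only [Finset.mem_filter]
      exact ⟨(N.G.edges_sub _ h).1, Relation.ReflTransGen.refl⟩
    have := hsub hv
    simp only [Finset.mem_filter] at this
    exact N.acyclic v w h this.2

/-- every vertex of `N` has in-degree at most 2, and in-degree 2 iff reticulation. -/
lemma inDeg_le_two (N : PhyloNet V X) {v : V} (hv : v ∈ N.G.verts) : N.G.inDeg v ≤ 2 := by
  by_cases hr : v = N.root
  · rw [hr, N.root_inDeg]; omega
  · rcases N.degrees v hv hr with ⟨h, _⟩ | ⟨h, _⟩ | ⟨h, _⟩ <;> omega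

lemma retic_of_inDeg_ge_two (N : PhyloNet V X) {v : V} (hv : v ∈ N.G.verts)
    (h : 2 ≤ N.G.inDeg v) : N.IsRetic v := by
  by_cases hr : v = N.root
  · rw [hr, N.root_inDeg] at h; omega
  · rcases N.degrees v hv hr with ⟨h1, _⟩ | ⟨h1, _⟩ | ⟨h1, _⟩ <;>
      first | (exfalso; omega) | exact h1

lemma inDeg_of_nonretic (N : PhyloNet V X) {v : V} (hv : v ∈ N.G.verts)
    (hr : v ≠ N.root) (h : ¬ N.IsRetic v) : N.G.inDeg v = 1 := by
  rcases N.degrees v hv hr with ⟨h1, _⟩ | ⟨h1, _⟩ | ⟨h1, _⟩ <;>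
    first | exact h1 | (exact absurd h1 h)

lemma head_mem_of_edge {G : Dgraph V} {e : V × V} (h : e ∈ G.edges) : e.2 ∈ G.verts :=
  (G.edges_sub e h).2

lemma tail_mem_of_edge {G : Dgraph V} {e : V × V} (h : e ∈ G.edges) : e.1 ∈ G.verts :=
  (G.edges_sub e h).1

/-- outdegree of a non-root non-leaf vertex is at least 1 -/
lemma outDeg_pos (N : PhyloNet V X) {v : V} (hv : v ∈ N.G.verts) (hx : v ∉ X) :
    ∃ w, (v, w) ∈ N.G.edges := by
  have hout : N.G.outDeg v ≠ 0 := by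
    intro h0
    have : v ∈ N.G.leaves := Finset.mem_filter.mpr ⟨hv, h0⟩
    rw [N.leaves_eq] at this
    exact hx this
  have : (N.G.edges.filter (fun e => e.1 = v)).Nonempty := by
    rw [← Finset.card_pos]
    exact Nat.pos_of_ne_zero hout
  obtain ⟨e, he⟩ := this
  simp only [Finset.mem_filter] at he
  exact ⟨e.2, by rw [← he.2]; exact he.1⟩

lemma exists_in_edge (N : PhyloNet V X) {v : V} (hv : v ∈ N.G.verts) (hr : v ≠ N.root) :
    ∃ u, (u, v) ∈ N.G.edges := by
  have h1 : N.G.inDeg v ≠ 0 := by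
    rcases N.degrees v hv hr with ⟨h1, _⟩ | ⟨h1, _⟩ | ⟨h1, _⟩ <;> omega
  have : (N.G.edges.filter (fun e => e.2 = v)).Nonempty := by
    rw [← Finset.card_pos]; exact Nat.pos_of_ne_zero h1
  obtain ⟨e, he⟩ := this
  simp only [Finset.mem_filter] at he
  exact ⟨e.1, by rw [← he.2]; exact he.1⟩

/-- card of edges equals sum of in-degrees -/
lemma card_edges_eq_sum_inDeg (G : Dgraph V) :
    G.edges.card = ∑ v ∈ G.verts, G.inDeg v :=
  Finset.card_eq_sum_card_fiberwise (fun e he => (G.edges_sub e he).2)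

/-- Euler-type count for the network: `|E| = |V| - 1 + r`. -/
lemma network_count (N : PhyloNet V X) :
    N.G.edges.card + 1 = N.G.verts.card + N.numRetic := by
  have h1 := card_edges_eq_sum_inDeg N.G
  have hXroot : N.root ∈ N.G.verts := N.root_mem
  rw [← Finset.insert_erase hXroot, Finset.sum_insert (Finset.notMem_erase _ _)] at h1
  rw [N.root_inDeg, zero_add] at h1
  have h2 : ∀ v ∈ N.G.verts.erase N.root,
      N.G.inDeg v = 1 + (if N.IsRetic v then 1 else 0) := by
    intro v hv
    have hvm := Finset.mem_of_mem_erase hv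
    have hvr := Finset.ne_of_mem_erase hv
    by_cases hret : N.IsRetic v
    · have h2 : N.G.inDeg v = 2 := hret
      simp [hret, h2]
    · simp [hret, inDeg_of_nonretic N hvm hvr hret]
  rw [Finset.sum_congr rfl h2, Finset.sum_add_distrib] at h1
  have h3 : ∑ v ∈ N.G.verts.erase N.root, (1 : ℕ) = N.G.verts.card - 1 := by
    rw [Finset.sum_const, smul_eq_mul, mul_one, Finset.card_erase_of_mem hXroot]
  have h4 : ∑ v ∈ N.G.verts.erase N.root, (if N.IsRetic v then 1 else 0) = N.numRetic := by
    rw [← Finset.card_filter]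
    unfold PhyloNet.numRetic
    congr 1
    rw [← Finset.insert_erase hXroot, Finset.filter_insert]
    have : ¬ N.IsRetic N.root := by
      unfold PhyloNet.IsRetic
      rw [N.root_inDeg]; omega
    simp [this]
  rw [h3, h4] at h1
  have hpos : 1 ≤ N.G.verts.card := Finset.card_pos.mpr ⟨N.root, hXroot⟩
  omega

end Development
section Development2

open Finset

variable {V C : Type} {X : Finset V}

lemma inDeg_zero_of_not_mem {G : Dgraph V} {v : V} (h : v ∉ G.verts) : G.inDeg v = 0 := by
  unfold Dgraph.inDeg
  rw [Finset.card_eq_zero, Finset.filter_eq_empty_iff]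
  intro e he heq
  exact h (heq ▸ (G.edges_sub e he).2)

/-- Invariant preserved by subdivision. -/
structure TreeInv (X : Finset V) (r : V) (G : Dgraph V) : Prop where
  root_mem : r ∈ G.verts
  root_in : G.inDeg r = 0
  indeg_le : ∀ v, G.inDeg v ≤ 1
  indeg_one : ∀ v ∈ G.verts, v ≠ r → G.inDeg v = 1
  count : G.verts.card = G.edges.card + 1
  lv : G.leaves = X
  reach : ∀ v ∈ G.verts, G.Reaches r v
  noloop : ∀ e ∈ G.edges, e.1 ≠ e.2

lemma TreeInv.subdiv {r : V} {G G' : Dgraph V} (hI : TreeInv X r G)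
    (h : Dgraph.SubdivStep G G') : TreeInv X r G' := by
  obtain ⟨u, w, v, huw, hv, hverts, hedges⟩ := h
  have hu : u ∈ G.verts := tail_mem_of_edge huw
  have hw : w ∈ G.verts := head_mem_of_edge huw
  have hvu : v ≠ u := fun h => hv (h ▸ hu)
  have hvw : v ≠ w := fun h => hv (h ▸ hw)
  have huw' : u ≠ w := hI.noloop _ huw
  have hmem : ∀ d, d ∈ G'.edges ↔ d = (u,v) ∨ d = (v,w) ∨ (d ∈ G.edges ∧ d ≠ (u,w)) := by
    intro d
    rw [hedges]
    simp only [Finset.mem_insert, Finset.mem_erase]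
    tauto
  have hnotold : ∀ d : V × V, d.1 = v ∨ d.2 = v → d ∉ G.edges := by
    rintro d (h1 | h1) hd
    · exact hv (h1 ▸ (G.edges_sub d hd).1)
    · exact hv (h1 ▸ (G.edges_sub d hd).2)
  -- in-degrees
  have hdegv : G'.inDeg v = 1 := by
    unfold Dgraph.inDeg
    have : G'.edges.filter (fun e => e.2 = v) = {(u,v)} := by
      ext d
      simp only [Finset.mem_filter, Finset.mem_singleton, hmem d]
      constructor
      · rintro ⟨(rfl | rfl | ⟨hd, _⟩), h2⟩
        · rfl
        · exact absurd h2 hvw.symm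
        · exact absurd hd (hnotold d (Or.inr h2))
      · rintro rfl; exact ⟨Or.inl rfl, rfl⟩
    rw [this, Finset.card_singleton]
  have hdegw : G'.inDeg w = G.inDeg w := by
    unfold Dgraph.inDeg
    have : G'.edges.filter (fun e => e.2 = w) =
        insert (v,w) ((G.edges.filter (fun e => e.2 = w)).erase (u,w)) := by
      ext d
      simp only [Finset.mem_filter, Finset.mem_insert, Finset.mem_erase, hmem d]
      constructor
      · rintro ⟨(rfl | rfl | ⟨hd, hne⟩), h2⟩
        · exact absurd h2 hvw
        · exact Or.inl rfl
        · exact Or.inr ⟨hne, hd, h2⟩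
      · rintro (rfl | ⟨hne, hd, h2⟩)
        · exact ⟨Or.inr (Or.inl rfl), rfl⟩
        · exact ⟨Or.inr (Or.inr ⟨hd, hne⟩), h2⟩
    rw [this, Finset.card_insert_of_notMem, Finset.card_erase_of_mem]
    · have hmemuw : (u,w) ∈ G.edges.filter (fun e => e.2 = w) :=
        Finset.mem_filter.mpr ⟨huw, rfl⟩
      have hpos : 0 < (G.edges.filter (fun e => e.2 = w)).card :=
        Finset.card_pos.mpr ⟨_, hmemuw⟩
      omega
    · exact Finset.mem_filter.mpr ⟨huw, rfl⟩
    · intro hmem'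
      have := Finset.mem_of_mem_erase hmem'
      simp only [Finset.mem_filter] at this
      exact hnotold _ (Or.inl rfl) this.1
  have hdegd : ∀ x, x ≠ v → x ≠ w → G'.inDeg x = G.inDeg x := by
    intro x hxv hxw
    unfold Dgraph.inDeg
    congr 1
    ext d
    simp only [Finset.mem_filter, hmem d]
    constructor
    · rintro ⟨(rfl | rfl | ⟨hd, _⟩), h2⟩
      · exact absurd h2 hxv.symm
      · exact absurd h2 hxw.symm
      · exact ⟨hd, h2⟩
    · rintro ⟨hd, h2⟩
      refine ⟨Or.inr (Or.inr ⟨hd, ?_⟩), h2⟩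
      rintro rfl
      exact hxw h2.symm
  -- out-degrees
  have houtv : G'.outDeg v = 1 := by
    unfold Dgraph.outDeg
    have : G'.edges.filter (fun e => e.1 = v) = {(v,w)} := by
      ext d
      simp only [Finset.mem_filter, Finset.mem_singleton, hmem d]
      constructor
      · rintro ⟨(rfl | rfl | ⟨hd, _⟩), h2⟩
        · exact absurd h2 hvu.symm
        · rfl
        · exact absurd hd (hnotold d (Or.inl h2))
      · rintro rfl; exact ⟨Or.inr (Or.inl rfl), rfl⟩
    rw [this, Finset.card_singleton]
  have houtu : G'.outDeg u = G.outDeg u := by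
    unfold Dgraph.outDeg
    have : G'.edges.filter (fun e => e.1 = u) =
        insert (u,v) ((G.edges.filter (fun e => e.1 = u)).erase (u,w)) := by
      ext d
      simp only [Finset.mem_filter, Finset.mem_insert, Finset.mem_erase, hmem d]
      constructor
      · rintro ⟨(rfl | rfl | ⟨hd, hne⟩), h2⟩
        · exact Or.inl rfl
        · exact absurd h2 hvu
        · exact Or.inr ⟨hne, hd, h2⟩
      · rintro (rfl | ⟨hne, hd, h2⟩)
        · exact ⟨Or.inl rfl, rfl⟩
        · exact ⟨Or.inr (Or.inr ⟨hd, hne⟩), h2⟩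
    rw [this, Finset.card_insert_of_notMem, Finset.card_erase_of_mem]
    · have hmemuw : (u,w) ∈ G.edges.filter (fun e => e.1 = u) :=
        Finset.mem_filter.mpr ⟨huw, rfl⟩
      have hpos : 0 < (G.edges.filter (fun e => e.1 = u)).card :=
        Finset.card_pos.mpr ⟨_, hmemuw⟩
      omega
    · exact Finset.mem_filter.mpr ⟨huw, rfl⟩
    · intro hmem'
      have := Finset.mem_of_mem_erase hmem'
      simp only [Finset.mem_filter] at this
      exact hnotold _ (Or.inr rfl) this.1
  have houtd : ∀ x, x ≠ v → x ≠ u → G'.outDeg x = G.outDeg x := by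
    intro x hxv hxu
    unfold Dgraph.outDeg
    congr 1
    ext d
    simp only [Finset.mem_filter, hmem d]
    constructor
    · rintro ⟨(rfl | rfl | ⟨hd, _⟩), h2⟩
      · exact absurd h2 hxu.symm
      · exact absurd h2 hxv.symm
      · exact ⟨hd, h2⟩
    · rintro ⟨hd, h2⟩
      refine ⟨Or.inr (Or.inr ⟨hd, ?_⟩), h2⟩
      rintro rfl
      exact hxu h2.symm
  have hrv : r ≠ v := fun h => hv (h ▸ hI.root_mem)
  have hrw : r ≠ w := by
    intro h
    have : G.inDeg r ≠ 0 := by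
      have : (u, w) ∈ G.edges.filter (fun e => e.2 = r) :=
        Finset.mem_filter.mpr ⟨huw, h.symm⟩
      have hpos : 0 < (G.edges.filter (fun e => e.2 = r)).card :=
        Finset.card_pos.mpr ⟨_, this⟩
      unfold Dgraph.inDeg; omega
    exact this hI.root_in
  have hlift : ∀ a b, G.Reaches a b → G'.Reaches a b := by
    intro a b hab
    induction hab with
    | refl => exact Relation.ReflTransGen.refl
    | tail h1 h2 ih =>
      rename_i b' c'
      by_cases hc : (b', c') = (u, w)
      · have h3 : G'.edgeRel b' v := by
          unfold Dgraph.edgeRel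
          rw [hmem]
          exact Or.inl (by rw [show b' = u from congrArg Prod.fst hc])
        have h4 : G'.edgeRel v c' := by
          unfold Dgraph.edgeRel
          rw [hmem]
          exact Or.inr (Or.inl (by rw [show c' = w from congrArg Prod.snd hc]))
        exact (ih.tail h3).tail h4
      · have h3 : G'.edgeRel b' c' := by
          unfold Dgraph.edgeRel
          rw [hmem]
          exact Or.inr (Or.inr ⟨h2, hc⟩)
        exact ih.tail h3
  constructor
  · rw [hverts]; exact Finset.mem_insert_of_mem hI.root_mem
  · rw [hdegd r hrv hrw]; exact hI.root_in
  · intro x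
    by_cases hxv : x = v
    · rw [hxv, hdegv]
    · by_cases hxw : x = w
      · rw [hxw, hdegw]; exact hI.indeg_le w
      · rw [hdegd x hxv hxw]; exact hI.indeg_le x
  · intro x hx hxr
    rw [hverts] at hx
    rcases Finset.mem_insert.mp hx with rfl | hx
    · exact hdegv
    · by_cases hxw : x = w
      · rw [hxw, hdegw]; exact hI.indeg_one w hw (hxw ▸ hxr)
      · have hxv : x ≠ v := fun h => hv (h ▸ hx)
        rw [hdegd x hxv hxw]; exact hI.indeg_one x hx hxr
  · rw [hverts, hedges, Finset.card_insert_of_notMem hv]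
    rw [Finset.card_insert_of_notMem, Finset.card_insert_of_notMem,
        Finset.card_erase_of_mem huw]
    · have hpos : 0 < G.edges.card := Finset.card_pos.mpr ⟨_, huw⟩
      have := hI.count
      omega
    · intro hmem'
      have := Finset.mem_of_mem_erase hmem'
      exact hnotold _ (Or.inl rfl) this
    · rw [Finset.mem_insert]
      rintro (h1 | h1)
      · exact hvu (congrArg Prod.fst h1).symm
      · exact hnotold _ (Or.inr rfl) (Finset.mem_of_mem_erase h1)
  · ext x
    unfold Dgraph.leaves
    simp only [Finset.mem_filter, hverts, Finset.mem_insert]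
    constructor
    · rintro ⟨(rfl | hx), h2⟩
      · rw [houtv] at h2; omega
      · by_cases hxu : x = u
        · rw [hxu, houtu] at h2
          rw [← hI.lv]
          exact Finset.mem_filter.mpr ⟨hxu ▸ hx, hxu ▸ h2⟩
        · have hxv : x ≠ v := fun h => hv (h ▸ hx)
          rw [houtd x hxv hxu] at h2
          rw [← hI.lv]
          exact Finset.mem_filter.mpr ⟨hx, h2⟩
    · intro hx
      rw [← hI.lv] at hx
      have hx' := Finset.mem_filter.mp hx
      have hxv : x ≠ v := fun h => hv (h ▸ hx'.1)
      by_cases hxu : x = u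
      · subst hxu
        exact ⟨Or.inr hx'.1, by rw [houtu]; exact hx'.2⟩
      · exact ⟨Or.inr hx'.1, by rw [houtd x hxv hxu]; exact hx'.2⟩
  · intro x hx
    rw [hverts] at hx
    rcases Finset.mem_insert.mp hx with rfl | hx
    · have h1 := hlift r u (hI.reach u hu)
      refine h1.tail ?_
      unfold Dgraph.edgeRel
      rw [hmem]
      exact Or.inl rfl
    · exact hlift r x (hI.reach x hx)
  · intro e he
    rw [hmem] at he
    rcases he with rfl | rfl | ⟨he, _⟩
    · exact hvu.symm
    · exact hvw
    · exact hI.noloop e he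

lemma TreeInv.of_subdivision {r : V} {G G' : Dgraph V} (hI : TreeInv X r G)
    (h : G'.IsSubdivisionOf G) : TreeInv X r G' := by
  induction h with
  | refl => exact hI
  | tail _ h2 ih => exact ih.subdiv h2

/-- the base invariant for a tree network -/
lemma TreeInv.of_treeNet (T : PhyloNet V X) (hT : T.IsTreeNet) : TreeInv X T.root T.G := by
  have hone : ∀ v ∈ T.G.verts, v ≠ T.root → T.G.inDeg v = 1 := by
    intro v hv hvr
    have h1 := hT v hv
    rcases T.degrees v hv hvr with ⟨h2, _⟩ | ⟨h2, _⟩ | ⟨h2, _⟩ <;> omega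
  refine ⟨T.root_mem, T.root_inDeg, ?_, hone, ?_, T.leaves_eq, T.reach, ?_⟩
  · intro v
    by_cases hv : v ∈ T.G.verts
    · exact hT v hv
    · rw [inDeg_zero_of_not_mem hv]; omega
  · have h1 := card_edges_eq_sum_inDeg T.G
    rw [← Finset.insert_erase T.root_mem, Finset.sum_insert (Finset.notMem_erase _ _),
        T.root_inDeg, zero_add] at h1
    have h2 : ∀ v ∈ T.G.verts.erase T.root, T.G.inDeg v = 1 := fun v hv =>
      hone v (Finset.mem_of_mem_erase hv) (Finset.ne_of_mem_erase hv)
    rw [Finset.sum_congr rfl h2, Finset.sum_const, smul_eq_mul, mul_one,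
        Finset.card_erase_of_mem T.root_mem] at h1
    have hpos : 1 ≤ T.G.verts.card := Finset.card_pos.mpr ⟨T.root, T.root_mem⟩
    omega
  · intro e he
    intro hloop
    exact no_loops T (by rw [show e = (e.1, e.1) from Prod.ext rfl hloop.symm] at he; exact he)

end Development2
section Development3

open Finset

variable {V C : Type} {X : Finset V}

lemma emb_treeInv {N T : PhyloNet V X} {S : Dgraph V} (hT : T.IsTreeNet)
    (hE : N.IsEmbedding T S) : TreeInv X N.root S := by
  have h1 : TreeInv X T.root S := (TreeInv.of_treeNet T hT).of_subdivision hE.2.2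
  have hroot : N.root = T.root := by
    by_contra hne
    have h2 := h1.indeg_one N.root hE.2.1 hne
    have h3 : S.inDeg N.root ≤ N.G.inDeg N.root := inDeg_mono hE.1.2 _
    rw [N.root_inDeg] at h3; omega
  rw [hroot]; exact h1

lemma TreeInv.X_sub {r : V} {S : Dgraph V} (hI : TreeInv X r S) : X ⊆ S.verts := by
  intro x hx
  rw [← hI.lv] at hx
  exact (Finset.mem_filter.mp hx).1

lemma TreeInv.exists_out {r : V} {S : Dgraph V} (hI : TreeInv X r S) {v : V}
    (hv : v ∈ S.verts) (hx : v ∉ X) : ∃ w, (v, w) ∈ S.edges := by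
  have hout : S.outDeg v ≠ 0 := by
    intro h0
    exact hx (hI.lv ▸ Finset.mem_filter.mpr ⟨hv, h0⟩)
  have : (S.edges.filter (fun e => e.1 = v)).Nonempty := by
    rw [← Finset.card_pos]; exact Nat.pos_of_ne_zero hout
  obtain ⟨e, he⟩ := this
  simp only [Finset.mem_filter] at he
  exact ⟨e.2, by rw [← he.2]; exact he.1⟩

lemma TreeInv.in_edge_unique {r : V} {S : Dgraph V} (hI : TreeInv X r S) {d₁ d₂ : V × V}
    (h1 : d₁ ∈ S.edges) (h2 : d₂ ∈ S.edges) (he : d₁.2 = d₂.2) : d₁ = d₂ := by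
  have hle := hI.indeg_le d₂.2
  unfold Dgraph.inDeg at hle
  have hm1 : d₁ ∈ S.edges.filter (fun e => e.2 = d₂.2) := Finset.mem_filter.mpr ⟨h1, he⟩
  have hm2 : d₂ ∈ S.edges.filter (fun e => e.2 = d₂.2) := Finset.mem_filter.mpr ⟨h2, rfl⟩
  exact Finset.card_le_one.mp hle _ hm1 _ hm2

/-! ### Walks, chains, nodup chains -/

lemma getLast?_cons_append_cons {α : Type} (s : List α) (x : α) (t : List α) :
    ∀ a, (a :: (s ++ x :: t)).getLast? = (x :: t).getLast? := by
  induction s with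
  | nil => intro a; simp [List.getLast?_cons_cons]
  | cons c cs ih =>
    intro a
    rw [List.cons_append, List.getLast?_cons_cons]
    exact ih c

lemma nodup_chain_aux {α : Type} {r : α → α → Prop} :
    ∀ (n : ℕ) (l : List α) (a : α), l.length ≤ n → List.Chain r a l →
    ∃ l', List.Chain r a l' ∧ (a :: l').getLast? = (a :: l).getLast? ∧
      (a :: l').Nodup ∧ l' ⊆ l := by
  intro n
  induction n with
  | zero =>
    intro l a hl _
    have : l = [] := List.length_eq_zero_iff.mp (by omega)
    subst this
    exact ⟨[], List.Chain.nil, rfl, List.nodup_singleton a, fun x h => h⟩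
  | succ n ih =>
    intro l a hl hc
    by_cases ha : a ∈ l
    · obtain ⟨s, t, rfl⟩ := List.append_of_mem ha
      have hct : List.Chain r a t := (List.isChain_split (l₁ := a :: s).mp hc).2
      have hlen : t.length ≤ n := by
        rw [List.length_append, List.length_cons] at hl
        omega
      obtain ⟨l', h1, h2, h3, h4⟩ := ih t a hlen hct
      refine ⟨l', h1, ?_, h3, fun x hx => List.mem_append.mpr (Or.inr (List.mem_cons_of_mem _ (h4 hx)))⟩
      rw [h2, getLast?_cons_append_cons s a t a]
    · cases l with
      | nil => exact ⟨[], List.Chain.nil, rfl, List.nodup_singleton a, fun x h => h⟩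
      | cons c t =>
        have hc' : List.Chain r c t := (List.chain_cons.mp hc).2
        have hrac : r a c := (List.chain_cons.mp hc).1
        have hlen : t.length ≤ n := by simp at hl; omega
        obtain ⟨t', h1, h2, h3, h4⟩ := ih t c hlen hc'
        refine ⟨c :: t', List.chain_cons.mpr ⟨hrac, h1⟩, ?_, ?_, ?_⟩
        · rw [List.getLast?_cons_cons, h2, List.getLast?_cons_cons]
        · rw [List.nodup_cons]
          refine ⟨?_, h3⟩
          intro hmem
          rcases List.mem_cons.mp hmem with rfl | hmem'
          · exact ha List.mem_cons_self
          · exact ha (List.mem_cons.mpr (Or.inr (h4 hmem')))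
        · intro x hx
          rcases List.mem_cons.mp hx with rfl | hx'
          · exact List.mem_cons_self
          · exact List.mem_cons_of_mem _ (h4 hx')

lemma exists_nodup_chain {α : Type} {r : α → α → Prop} {a b : α}
    (h : Relation.ReflTransGen r a b) :
    ∃ l, List.Chain r a l ∧ (a :: l).getLast? = some b ∧ (a :: l).Nodup := by
  obtain ⟨l, hc, hlast⟩ := List.exists_isChain_cons_of_relationReflTransGen h
  obtain ⟨l', h1, h2, h3, _⟩ := nodup_chain_aux l.length l a le_rfl hc
  refine ⟨l', h1, ?_, h3⟩
  rw [h2, List.getLast?_eq_getLast (List.cons_ne_nil a l), hlast]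

end Development3
section Development4

open Finset

variable {V C : Type} {X : Finset V}

def adjMinus (N : PhyloNet V X) (e : V × V) (a b : V) : Prop :=
  ∃ d ∈ N.G.edges.erase e, d = (a, b) ∨ d = (b, a)

lemma adjMinus_symm (N : PhyloNet V X) (e : V × V) {a b : V} (h : adjMinus N e a b) :
    adjMinus N e b a := by
  obtain ⟨d, hd, h⟩ := h
  exact ⟨d, hd, h.symm⟩

lemma rtg_symm {α : Type} {r : α → α → Prop} (hr : ∀ a b, r a b → r b a) {a b : α}
    (h : Relation.ReflTransGen r a b) : Relation.ReflTransGen r b a := by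
  induction h with
  | refl => exact Relation.ReflTransGen.refl
  | tail _ h2 ih => exact Relation.ReflTransGen.head (hr _ _ h2) ih

lemma dgraph_adj_symm {G : Dgraph V} {a b : V} (h : G.adj a b) : G.adj b a := h.symm

lemma seg_reach {H : Dgraph V} {L : List V} {pd : V} {lo hi : ℕ}
    (hadj : ∀ p, lo ≤ p → p + 1 ≤ hi → H.adj (L.getD p pd) (L.getD (p+1) pd)) :
    ∀ d, lo + d ≤ hi → Relation.ReflTransGen H.adj (L.getD lo pd) (L.getD (lo+d) pd) := by
  intro d
  induction d with
  | zero => intro _; exact Relation.ReflTransGen.refl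
  | succ d ih =>
    intro hle
    exact (ih (by omega)).tail (hadj (lo+d) (by omega) (by omega))

lemma getD_mem {L : List V} {p : ℕ} (h : p < L.length) (pd : V) : L.getD p pd ∈ L := by
  rw [List.getD_eq_getElem L pd h]
  exact List.getElem_mem h

lemma getD_inj {L : List V} (hnd : L.Nodup) {p q : ℕ} (hp : p < L.length)
    (hq : q < L.length) (pd : V) (h : L.getD p pd = L.getD q pd) : p = q := by
  rw [List.getD_eq_getElem L pd hp, List.getD_eq_getElem L pd hq] at h
  exact (List.Nodup.getElem_inj_iff hnd).mp h

lemma chain_getD {r : V → V → Prop} {L : List V} (h : L.Chain' r) (pd : V) :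
    ∀ p, p + 1 < L.length → r (L.getD p pd) (L.getD (p+1) pd) := by
  intro p hp
  rw [List.getD_eq_getElem L pd (by omega), List.getD_eq_getElem L pd hp]
  have := List.isChain_iff_getElem.mp h p (by omega)
  simpa using this

end Development4
section Development5

open Finset

variable {V C : Type} {X : Finset V}

lemma exists_bic_of_cycleWalk (N : PhyloNet V X) (e : V × V) (he : e ∈ N.G.edges)
    (hw : Relation.ReflTransGen (adjMinus N e) e.2 e.1) :
    ∃ Cg : Dgraph V, Cg.IsSubgraph N.G ∧ Cg.Biconnected ∧ e ∈ Cg.edges ∧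
      2 ≤ Cg.edges.card := by
  have hne : e.1 ≠ e.2 := by
    intro h
    exact no_loops N (show (e.1, e.1) ∈ N.G.edges by
      rw [show (e.1, e.1) = e from Prod.ext rfl h]; exact he)
  obtain ⟨l, hc, hlast, hnd⟩ := exists_nodup_chain hw
  have hlnil : l ≠ [] := by
    intro h
    subst h
    simp at hlast
    exact hne hlast.symm
  set pd := e.2 with hpd
  set L := e.2 :: l with hL
  have hlen2 : 2 ≤ L.length := by
    rw [hL]
    cases l with
    | nil => exact absurd rfl hlnil
    | cons c cs => simp
  have hL0 : L.getD 0 pd = e.2 := rfl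
  have hLlast : L.getD (L.length - 1) pd = e.1 := by
    have h1 : L.getLast? = some (L.getLast (List.cons_ne_nil _ _)) :=
      List.getLast?_eq_getLast _
    rw [hlast] at h1
    have h2 : L.getLast (List.cons_ne_nil _ _) = e.1 := by
      injection h1.symm
    rw [← h2, List.getLast_eq_getElem, List.getD_eq_getElem L pd (by omega)]
  have hchain' : L.Chain' (adjMinus N e) := hc
  have hadjM : ∀ p, p + 1 < L.length →
      adjMinus N e (L.getD p pd) (L.getD (p+1) pd) := chain_getD hchain' pd
  -- the cycle graph
  set P : V × V → Prop := fun d => d = e ∨ ∃ p, p + 1 < L.length ∧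
      (d = (L.getD p pd, L.getD (p+1) pd) ∨ d = (L.getD (p+1) pd, L.getD p pd)) with hP
  set Cg : Dgraph V := ⟨L.toFinset, N.G.edges.filter P, by
    intro d hd
    have hd' := Finset.mem_filter.mp hd
    rcases hd'.2 with rfl | ⟨p, hp, hor | hor⟩
    · constructor
      · rw [List.mem_toFinset, ← hLlast]
        exact getD_mem (by omega) pd
      · rw [List.mem_toFinset, ← hL0]
        exact getD_mem (by omega) pd
    · rw [hor]
      exact ⟨List.mem_toFinset.mpr (getD_mem (by omega) pd),
        List.mem_toFinset.mpr (getD_mem hp pd)⟩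
    · rw [hor]
      exact ⟨List.mem_toFinset.mpr (getD_mem hp pd),
        List.mem_toFinset.mpr (getD_mem (by omega) pd)⟩⟩ with hCg
  have hCedge : ∀ p, p + 1 < L.length → ∃ d ∈ Cg.edges, d ≠ e ∧
      (d = (L.getD p pd, L.getD (p+1) pd) ∨ d = (L.getD (p+1) pd, L.getD p pd)) := by
    intro p hp
    obtain ⟨d, hd, hor⟩ := hadjM p hp
    have hdne : d ≠ e := (Finset.mem_erase.mp hd).1
    have hdN : d ∈ N.G.edges := Finset.mem_of_mem_erase hd
    exact ⟨d, Finset.mem_filter.mpr ⟨hdN, Or.inr ⟨p, hp, hor⟩⟩, hdne, hor⟩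
  have hCadjD : ∀ (x : V) p, p + 1 < L.length → L.getD p pd ≠ x → L.getD (p+1) pd ≠ x →
      (Cg.deleteVert x).adj (L.getD p pd) (L.getD (p+1) pd) := by
    intro x p hp h1 h2
    obtain ⟨d, hd, _, hor⟩ := hCedge p hp
    rcases hor with rfl | rfl
    · exact Or.inl (Finset.mem_filter.mpr ⟨hd, h1, h2⟩)
    · exact Or.inr (Finset.mem_filter.mpr ⟨hd, h2, h1⟩)
  have hCadj : ∀ p, p + 1 < L.length → Cg.adj (L.getD p pd) (L.getD (p+1) pd) := by
    intro p hp
    obtain ⟨d, hd, _, hor⟩ := hCedge p hp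
    rcases hor with rfl | rfl
    · exact Or.inl hd
    · exact Or.inr hd
  have hCadj_symm : ∀ a b, Cg.adj a b → Cg.adj b a := fun a b h => h.symm
  have hCDadj_symm : ∀ (x : V) a b, (Cg.deleteVert x).adj a b → (Cg.deleteVert x).adj b a :=
    fun x a b h => h.symm
  have hmemidx : ∀ a ∈ Cg.verts, ∃ p, p < L.length ∧ L.getD p pd = a := by
    intro a ha
    have := List.mem_toFinset.mp ha
    obtain ⟨p, hp, h⟩ := List.mem_iff_getElem.mp this
    exact ⟨p, hp, by rw [List.getD_eq_getElem L pd hp]; exact h⟩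
  have hconn : Cg.Connected := by
    intro a ha b hb
    obtain ⟨p, hp, rfl⟩ := hmemidx a ha
    obtain ⟨q, hq, rfl⟩ := hmemidx b hb
    have r1 : Relation.ReflTransGen Cg.adj (L.getD 0 pd) (L.getD p pd) := by
      have := seg_reach (H := Cg) (L := L) (pd := pd) (lo := 0) (hi := p)
        (fun t _ ht1 => hCadj t (by omega)) p (by omega)
      simpa using this
    have r2 : Relation.ReflTransGen Cg.adj (L.getD 0 pd) (L.getD q pd) := by
      have := seg_reach (H := Cg) (L := L) (pd := pd) (lo := 0) (hi := q)
        (fun t _ ht1 => hCadj t (by omega)) q (by omega)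
      simpa using this
    exact (rtg_symm hCadj_symm r1).trans r2
  refine ⟨Cg, ⟨?_, Finset.filter_subset _ _⟩, ⟨hconn, ?_⟩, ?_, ?_⟩
  · -- verts ⊆ N.verts
    intro a ha
    obtain ⟨p, hp, rfl⟩ := hmemidx a ha
    cases p with
    | zero => exact head_mem_of_edge he
    | succ p =>
      obtain ⟨d, hd, hor⟩ := hadjM p hp
      have hdN : d ∈ N.G.edges := Finset.mem_of_mem_erase hd
      rcases hor with rfl | rfl
      · exact head_mem_of_edge hdN
      · exact tail_mem_of_edge hdN
  · -- delete-vertex connectivity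
    intro x hx
    obtain ⟨ix, hix, hixv⟩ := hmemidx x hx
    have hidx_ne : ∀ q, q < L.length → q ≠ ix → L.getD q pd ≠ x := by
      intro q hq hqix h
      exact hqix (getD_inj hnd hq hix pd (h.trans hixv.symm))
    -- key reachability towards pivot
    have key : ∀ j, j < L.length → j ≠ ix →
        Relation.ReflTransGen (Cg.deleteVert x).adj (L.getD j pd)
          (L.getD (if ix = 0 then L.length - 1 else 0) pd) := by
      intro j hj hjix
      by_cases hixz : ix = 0
      · -- pivot is the last; j > ix = 0
        rw [if_pos hixz]
        have hj0 : 0 < j := by omega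
        have r1 : Relation.ReflTransGen (Cg.deleteVert x).adj (L.getD j pd)
            (L.getD (j + (L.length - 1 - j)) pd) := by
          refine seg_reach (lo := j) (hi := L.length - 1)
            (fun t ht1 ht2 => hCadjD x t (by omega)
              (hidx_ne t (by omega) (by omega)) (hidx_ne (t+1) (by omega) (by omega))) _ (by omega)
        have harith : j + (L.length - 1 - j) = L.length - 1 := by omega
        rw [harith] at r1
        exact r1
      · -- pivot is 0
        rw [if_neg hixz]
        by_cases hcmp : j < ix
        · have r1 : Relation.ReflTransGen (Cg.deleteVert x).adj (L.getD 0 pd)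
              (L.getD (0 + j) pd) := by
            refine seg_reach (lo := 0) (hi := j)
              (fun t ht1 ht2 => hCadjD x t (by omega)
                (hidx_ne t (by omega) (by omega)) (hidx_ne (t+1) (by omega) (by omega))) _ (by omega)
          rw [Nat.zero_add] at r1
          exact rtg_symm (hCDadj_symm x) r1
        · have hgt : ix < j := by omega
          have r1 : Relation.ReflTransGen (Cg.deleteVert x).adj (L.getD j pd)
              (L.getD (j + (L.length - 1 - j)) pd) := by
            refine seg_reach (lo := j) (hi := L.length - 1)
              (fun t ht1 ht2 => hCadjD x t (by omega)
                (hidx_ne t (by omega) (by omega)) (hidx_ne (t+1) (by omega) (by omega))) _ (by omega)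
          have harith : j + (L.length - 1 - j) = L.length - 1 := by omega
          rw [harith] at r1
          -- now step from last to 0 via e
          have hixlast : ix ≠ L.length - 1 := by omega
          have hestep : (Cg.deleteVert x).adj (L.getD (L.length - 1) pd) (L.getD 0 pd) := by
            rw [hLlast, hL0]
            refine Or.inl (Finset.mem_filter.mpr ⟨Finset.mem_filter.mpr ⟨he, Or.inl rfl⟩, ?_, ?_⟩)
            · rw [← hLlast]; exact hidx_ne _ (by omega) (by omega)
            · rw [← hL0]; exact hidx_ne _ (by omega) (by omega)
          exact r1.tail hestep
    intro a ha b hb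
    have hav : a ∈ Cg.verts ∧ a ≠ x := by
      have := Finset.mem_erase.mp ha
      exact ⟨this.2, this.1⟩
    have hbv : b ∈ Cg.verts ∧ b ≠ x := by
      have := Finset.mem_erase.mp hb
      exact ⟨this.2, this.1⟩
    obtain ⟨p, hp, rfl⟩ := hmemidx a hav.1
    obtain ⟨q, hq, rfl⟩ := hmemidx b hbv.1
    have hpix : p ≠ ix := fun h => hav.2 (h ▸ hixv ▸ rfl)
    have hqix : q ≠ ix := fun h => hbv.2 (h ▸ hixv ▸ rfl)
    exact (key p hp hpix).trans (rtg_symm (hCDadj_symm x) (key q hq hqix))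
  · exact Finset.mem_filter.mpr ⟨he, Or.inl rfl⟩
  · -- at least two edges
    obtain ⟨d, hd, hdne, _⟩ := hCedge 0 (by omega)
    have hsub : ({e, d} : Finset (V × V)) ⊆ Cg.edges := by
      intro z hz
      rcases Finset.mem_insert.mp hz with rfl | hz
      · exact Finset.mem_filter.mpr ⟨he, Or.inl rfl⟩
      · rw [Finset.mem_singleton.mp hz]; exact hd
    calc 2 = ({e, d} : Finset (V × V)).card := by
            rw [Finset.card_insert_of_notMem (by simpa using hdne.symm), Finset.card_singleton]
      _ ≤ Cg.edges.card := Finset.card_le_card hsub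

end Development5
section Development6

open Finset

variable {V C : Type} {X : Finset V}

def Dgraph.gunion (G H : Dgraph V) : Dgraph V :=
  ⟨G.verts ∪ H.verts, G.edges ∪ H.edges, by
    intro e he
    rcases Finset.mem_union.mp he with h | h
    · exact ⟨Finset.mem_union_left _ (G.edges_sub e h).1,
        Finset.mem_union_left _ (G.edges_sub e h).2⟩
    · exact ⟨Finset.mem_union_right _ (H.edges_sub e h).1,
        Finset.mem_union_right _ (H.edges_sub e h).2⟩⟩

lemma rtg_mono {α : Type} {r s : α → α → Prop} (h : ∀ a b, r a b → s a b) {a b : α}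
    (hr : Relation.ReflTransGen r a b) : Relation.ReflTransGen s a b := by
  induction hr with
  | refl => exact Relation.ReflTransGen.refl
  | tail _ h2 ih => exact ih.tail (h _ _ h2)

lemma adj_mono {G K : Dgraph V} (h : G.edges ⊆ K.edges) {a b : V} (hadj : G.adj a b) :
    K.adj a b := by
  rcases hadj with h1 | h1
  · exact Or.inl (h h1)
  · exact Or.inr (h h1)

lemma adj_delete_mono {G K : Dgraph V} (h : G.edges ⊆ K.edges) (x : V) {a b : V}
    (hadj : (G.deleteVert x).adj a b) : (K.deleteVert x).adj a b := by
  rcases hadj with h1 | h1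
  · have := Finset.mem_filter.mp h1
    exact Or.inl (Finset.mem_filter.mpr ⟨h this.1, this.2⟩)
  · have := Finset.mem_filter.mp h1
    exact Or.inr (Finset.mem_filter.mpr ⟨h this.1, this.2⟩)

lemma reach_delete_of_not_mem {G : Dgraph V} {x : V} (hx : x ∉ G.verts) {u v : V}
    (hu : u ∈ G.verts) (h : Relation.ReflTransGen G.adj u v) :
    Relation.ReflTransGen (G.deleteVert x).adj u v ∧ (v = u ∨ v ∈ G.verts) := by
  induction h with
  | refl => exact ⟨Relation.ReflTransGen.refl, Or.inl rfl⟩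
  | tail h1 h2 ih =>
    rename_i b c
    have hbv : b ∈ G.verts := by
      rcases ih.2 with h3 | h3
      · rw [h3]; exact hu
      · exact h3
    have hcv : c ∈ G.verts := by
      rcases h2 with h3 | h3
      · exact (G.edges_sub _ h3).2
      · exact (G.edges_sub _ h3).1
    have hbx : b ≠ x := fun h => hx (h ▸ hbv)
    have hcx : c ≠ x := fun h => hx (h ▸ hcv)
    have hadj : (G.deleteVert x).adj b c := by
      rcases h2 with h3 | h3
      · exact Or.inl (Finset.mem_filter.mpr ⟨h3, hbx, hcx⟩)
      · exact Or.inr (Finset.mem_filter.mpr ⟨h3, hcx, hbx⟩)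
    exact ⟨ih.1.tail hadj, Or.inr hcv⟩

lemma bic_union {G H : Dgraph V} (hG : G.Biconnected) (hH : H.Biconnected) {a b : V}
    (haG : a ∈ G.verts) (haH : a ∈ H.verts) (hbG : b ∈ G.verts) (hbH : b ∈ H.verts)
    (hab : a ≠ b) : (G.gunion H).Biconnected := by
  have hGsubU : G.edges ⊆ (G.gunion H).edges := Finset.subset_union_left
  have hHsubU : H.edges ⊆ (G.gunion H).edges := Finset.subset_union_right
  constructor
  · intro u hu v hv
    have hua : ∀ w, w ∈ (G.gunion H).verts →
        Relation.ReflTransGen (G.gunion H).adj w a := by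
      intro w hw
      rcases Finset.mem_union.mp hw with h | h
      · exact rtg_mono (fun _ _ => adj_mono hGsubU) (hG.1 w h a haG)
      · exact rtg_mono (fun _ _ => adj_mono hHsubU) (hH.1 w h a haH)
    exact (hua u hu).trans (rtg_symm (fun _ _ h => h.symm) (hua v hv))
  · intro x hx
    intro u hu v hv
    -- pivot
    set p := if a = x then b else a with hp
    have hpx : p ≠ x := by
      rw [hp]; split
      · rename_i h; exact fun hc => hab (h.trans hc.symm)
      · rename_i h; exact h
    have hpG : p ∈ G.verts := by rw [hp]; split <;> assumption
    have hpH : p ∈ H.verts := by rw [hp]; split <;> assumption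
    have key : ∀ w, w ∈ (G.gunion H).verts.erase x →
        Relation.ReflTransGen ((G.gunion H).deleteVert x).adj w p := by
      intro w hw
      have hwx := Finset.ne_of_mem_erase hw
      have hwv := Finset.mem_of_mem_erase hw
      rcases Finset.mem_union.mp hwv with h | h
      · by_cases hxG : x ∈ G.verts
        · have hconn := hG.2 x hxG w (Finset.mem_erase.mpr ⟨hwx, h⟩) p
            (Finset.mem_erase.mpr ⟨hpx, hpG⟩)
          exact rtg_mono (fun _ _ => adj_delete_mono hGsubU x) hconn
        · have hconn := (reach_delete_of_not_mem hxG h (hG.1 w h p hpG)).1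
          exact rtg_mono (fun _ _ => adj_delete_mono hGsubU x) hconn
      · by_cases hxH : x ∈ H.verts
        · have hconn := hH.2 x hxH w (Finset.mem_erase.mpr ⟨hwx, h⟩) p
            (Finset.mem_erase.mpr ⟨hpx, hpH⟩)
          exact rtg_mono (fun _ _ => adj_delete_mono hHsubU x) hconn
        · have hconn := (reach_delete_of_not_mem hxH h (hH.1 w h p hpH)).1
          exact rtg_mono (fun _ _ => adj_delete_mono hHsubU x) hconn
    exact (key u hu).trans (rtg_symm (fun _ _ h => h.symm) (key v hv))

lemma isSubgraph_refl (G : Dgraph V) : G.IsSubgraph G := ⟨subset_rfl, subset_rfl⟩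

lemma isSubgraph_trans {G H K : Dgraph V} (h1 : G.IsSubgraph H) (h2 : H.IsSubgraph K) :
    G.IsSubgraph K := ⟨h1.1.trans h2.1, h1.2.trans h2.2⟩

/-- extension to a maximal biconnected subgraph -/
lemma exists_max_bic (N : PhyloNet V X) :
    ∀ (n : ℕ) (H : Dgraph V), H.IsSubgraph N.G → H.Biconnected →
    N.G.verts.card + N.G.edges.card ≤ n + (H.verts.card + H.edges.card) →
    ∃ M, Dgraph.IsBicomp N.G M ∧ H.IsSubgraph M := by
  intro n
  induction n with
  | zero =>
    intro H hsub hbic hcard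
    refine ⟨H, ⟨hsub, hbic, ?_⟩, isSubgraph_refl H⟩
    intro H' hsub' hbic' hHH'
    have h1 : H'.verts = H.verts := by
      refine (Finset.eq_of_subset_of_card_le hHH'.1 ?_).symm
      have := Finset.card_le_card hsub'.1
      have := Finset.card_le_card hsub'.2
      have := Finset.card_le_card hHH'.1
      have := Finset.card_le_card hHH'.2
      omega
    have h2 : H'.edges = H.edges := by
      refine (Finset.eq_of_subset_of_card_le hHH'.2 ?_).symm
      have := Finset.card_le_card hsub'.1
      have := Finset.card_le_card hsub'.2
      have := Finset.card_le_card hHH'.1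
      have := Finset.card_le_card hHH'.2
      omega
    exact Dgraph.ext' h1 h2
  | succ n ih =>
    intro H hsub hbic hcard
    by_cases hmax : ∀ H', H'.IsSubgraph N.G → H'.Biconnected → H.IsSubgraph H' → H' = H
    · exact ⟨H, ⟨hsub, hbic, hmax⟩, isSubgraph_refl H⟩
    · push_neg at hmax
      obtain ⟨H', hsub', hbic', hHH', hne⟩ := hmax
      have hstrict : H.verts.card + H.edges.card + 1 ≤ H'.verts.card + H'.edges.card := by
        have h1 := Finset.card_le_card hHH'.1
        have h2 := Finset.card_le_card hHH'.2
        by_cases hv : H.verts = H'.verts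
        · have he : H.edges ≠ H'.edges := by
            intro he
            exact hne (Dgraph.ext' hv.symm he.symm)
          have : H.edges ⊂ H'.edges := Finset.ssubset_iff_subset_ne.mpr ⟨hHH'.2, he⟩
          have := Finset.card_lt_card this
          omega
        · have : H.verts ⊂ H'.verts := Finset.ssubset_iff_subset_ne.mpr ⟨hHH'.1, hv⟩
          have := Finset.card_lt_card this
          omega
      obtain ⟨M, hM, hM2⟩ := ih H' hsub' hbic' (by omega)
      exact ⟨M, hM, isSubgraph_trans hHH' hM2⟩

def IsRegion (N : PhyloNet V X) (B : Dgraph V) : Prop :=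
  Dgraph.IsBicomp N.G B ∧ 2 ≤ B.edges.card

/-- a region contains three pairwise distinct vertices, two of them distinct from
any given vertex -/
lemma region_three (N : PhyloNet V X) {B : Dgraph V} (hB : IsRegion N B) :
    ∀ v : V, ∃ p q : V, p ∈ B.verts ∧ q ∈ B.verts ∧ p ≠ q ∧ p ≠ v ∧ q ≠ v := by
  have hsubE : B.edges ⊆ N.G.edges := hB.1.1.2
  have hc2 := hB.2
  obtain ⟨e₁, he₁, e₂, he₂, hne⟩ := Finset.one_lt_card.mp (by omega : 1 < B.edges.card)
  have hnl₁ : e₁.1 ≠ e₁.2 := by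
    intro h
    exact no_loops N (show (e₁.1, e₁.1) ∈ N.G.edges by
      rw [show (e₁.1, e₁.1) = e₁ from Prod.ext rfl h]; exact hsubE he₁)
  have hnl₂ : e₂.1 ≠ e₂.2 := by
    intro h
    exact no_loops N (show (e₂.1, e₂.1) ∈ N.G.edges by
      rw [show (e₂.1, e₂.1) = e₂ from Prod.ext rfl h]; exact hsubE he₂)
  have hv1 : e₁.1 ∈ B.verts := (B.edges_sub _ he₁).1
  have hv2 : e₁.2 ∈ B.verts := (B.edges_sub _ he₁).2
  have hv3 : e₂.1 ∈ B.verts := (B.edges_sub _ he₂).1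
  have hv4 : e₂.2 ∈ B.verts := (B.edges_sub _ he₂).2
  have hthree : ∃ x, x ∈ B.verts ∧ x ≠ e₁.1 ∧ x ≠ e₁.2 := by
    by_cases h1 : e₂.1 ≠ e₁.1 ∧ e₂.1 ≠ e₁.2
    · exact ⟨e₂.1, hv3, h1⟩
    · push_neg at h1
      by_cases h2 : e₂.2 ≠ e₁.1 ∧ e₂.2 ≠ e₁.2
      · exact ⟨e₂.2, hv4, h2⟩
      · push_neg at h2
        exfalso
        -- e₂'s endpoints are among e₁'s endpoints
        by_cases ha : e₂.1 = e₁.1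
        · by_cases hb : e₂.2 = e₁.2
          · exact hne (Prod.ext ha.symm hb.symm)
          · have hb' : e₂.2 = e₁.1 := by
              by_cases hc : e₂.2 = e₁.1
              · exact hc
              · exact absurd (h2 hc) hb
            exact hnl₂ (ha.trans hb'.symm)
        · have ha' : e₂.1 = e₁.2 := h1 ha
          by_cases hb : e₂.2 = e₁.1
          · -- e₂ = (e₁.2, e₁.1) : two-cycle
            exact no_two_cycle N (hsubE he₁)
              (by rw [show (e₁.2, e₁.1) = e₂ from Prod.ext ha'.symm hb.symm]; exact hsubE he₂)
          · have hb' : e₂.2 = e₁.2 := by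
              by_cases hc : e₂.2 = e₁.1
              · exact absurd hc hb
              · exact h2 hc
            exact hnl₂ (ha'.trans hb'.symm)
  intro v
  obtain ⟨x, hx, hx1, hx2⟩ := hthree
  by_cases hv : v = e₁.1
  · exact ⟨e₁.2, x, hv2, hx, fun h => hx2 h.symm, fun h => hnl₁ (hv ▸ h).symm,
      fun h => hx1 (h.trans hv)⟩
  · by_cases hv' : v = e₁.2
    · exact ⟨e₁.1, x, hv1, hx, fun h => hx1 h.symm, fun h => hv (h.symm), fun h => hx2 (h.trans hv')⟩
    · exact ⟨e₁.1, e₁.2, hv1, hv2, hnl₁, fun h => hv h.symm, fun h => hv' h.symm⟩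

def degU (G : Dgraph V) (v : V) : ℕ := (G.edges.filter (fun e => e.1 = v ∨ e.2 = v)).card

lemma bic_min_degree {B : Dgraph V} (hbic : B.Biconnected)
    (noloop : ∀ e ∈ B.edges, e.1 ≠ e.2) {v p q : V} (hv : v ∈ B.verts) (hp : p ∈ B.verts)
    (hq : q ∈ B.verts) (hvp : v ≠ p) (hvq : v ≠ q) (hpq : p ≠ q) : 2 ≤ degU B v := by
  by_contra hlt
  push_neg at hlt
  unfold degU at hlt
  set A := B.edges.filter (fun e => e.1 = v ∨ e.2 = v) with hA
  by_cases hz : A.card = 0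
  · have hempty : A = ∅ := Finset.card_eq_zero.mp hz
    have hconn := hbic.1 v hv p hp
    rcases Relation.ReflTransGen.cases_head hconn with heq | ⟨c, hadj, _⟩
    · exact hvp heq
    · have hmem : ∃ d, d ∈ A := by
        rcases hadj with h1 | h1
        · exact ⟨(v, c), Finset.mem_filter.mpr ⟨h1, Or.inl rfl⟩⟩
        · exact ⟨(c, v), Finset.mem_filter.mpr ⟨h1, Or.inr rfl⟩⟩
      obtain ⟨d, hd⟩ := hmem
      rw [hempty] at hd
      exact absurd hd (Finset.notMem_empty d)
  · have hone : A.card = 1 := by omega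
    have hne : A.Nonempty := by rw [← Finset.card_pos]; omega
    obtain ⟨d, hd⟩ := hne
    have hd' := Finset.mem_filter.mp hd
    set m := if d.1 = v then d.2 else d.1 with hm
    have hmB : m ∈ B.verts := by
      rw [hm]; split
      · exact (B.edges_sub _ hd'.1).2
      · exact (B.edges_sub _ hd'.1).1
    have hmv : m ≠ v := by
      rw [hm]; split
      · rename_i h1; exact fun hc => noloop d hd'.1 (h1.trans hc.symm)
      · rename_i h1
        rcases hd'.2 with h2 | h2
        · exact absurd h2 h1
        · exact fun hc => noloop d hd'.1 (hc.trans h2.symm)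
    set t := if p = m then q else p with ht
    have htm : t ≠ m := by
      rw [ht]; split
      · rename_i h1; exact fun hc => hpq (h1.trans hc.symm)
      · rename_i h1; exact h1
    have htv : t ≠ v := by
      rw [ht]; split
      · exact fun h => hvq h.symm
      · exact fun h => hvp h.symm
    have htB : t ∈ B.verts := by rw [ht]; split <;> assumption
    have hconn := hbic.2 m hmB v (Finset.mem_erase.mpr ⟨fun h => hmv h.symm, hv⟩) t
      (Finset.mem_erase.mpr ⟨htm, htB⟩)
    have hcm : ∀ d', d' ∈ B.edges → (d'.1 = v ∨ d'.2 = v) → d' = d := by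
      intro d' hd1 hd2
      have hcard : A.card ≤ 1 := by omega
      exact Finset.card_le_one.mp hcard _ (Finset.mem_filter.mpr ⟨hd1, hd2⟩) _ hd
    rcases Relation.ReflTransGen.cases_head hconn with heq | ⟨c, hadj, _⟩
    · exact htv heq.symm
    · rcases hadj with h1 | h1
      · have h2 := Finset.mem_filter.mp h1
        have h3 := hcm (v, c) h2.1 (Or.inl rfl)
        have hmc : m = c := by rw [hm, ← h3]; simp
        exact h2.2.2 hmc.symm
      · have h2 := Finset.mem_filter.mp h1
        have h3 := hcm (c, v) h2.1 (Or.inr rfl)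
        have hcv : c ≠ v := fun h => noloop _ h2.1 h
        have hmc : m = c := by rw [hm, ← h3]; simp [hcv]
        exact h2.2.1 hmc.symm

end Development6
section Development7

open Finset

variable {V C : Type} {X : Finset V}

lemma noloop_of_sub {N : PhyloNet V X} {B : Dgraph V} (hsub : B.edges ⊆ N.G.edges) :
    ∀ e ∈ B.edges, e.1 ≠ e.2 := by
  intro e he h
  exact no_loops N (show (e.1, e.1) ∈ N.G.edges by
    rw [show (e.1, e.1) = e from Prod.ext rfl h]; exact hsub he)

lemma degU_mono {B G : Dgraph V} (h : B.edges ⊆ G.edges) (v : V) : degU B v ≤ degU G v :=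
  Finset.card_le_card (Finset.filter_subset_filter _ h)

lemma degU_le_inout (G : Dgraph V) (v : V) : degU G v ≤ G.inDeg v + G.outDeg v := by
  unfold degU Dgraph.inDeg Dgraph.outDeg
  have hsub : G.edges.filter (fun e => e.1 = v ∨ e.2 = v) ⊆
      G.edges.filter (fun e => e.1 = v) ∪ G.edges.filter (fun e => e.2 = v) := by
    intro d hd
    have hd' := Finset.mem_filter.mp hd
    rcases hd'.2 with h | h
    · exact Finset.mem_union_left _ (Finset.mem_filter.mpr ⟨hd'.1, h⟩)
    · exact Finset.mem_union_right _ (Finset.mem_filter.mpr ⟨hd'.1, h⟩)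
  have h1 := Finset.card_le_card hsub
  have h2 := Finset.card_union_le (G.edges.filter (fun e => e.1 = v))
    (G.edges.filter (fun e => e.2 = v))
  omega

lemma degU_le_three (N : PhyloNet V X) (v : V) : degU N.G v ≤ 3 := by
  have hsplit : degU N.G v ≤ N.G.inDeg v + N.G.outDeg v := degU_le_inout N.G v
  by_cases hv : v ∈ N.G.verts
  · by_cases hr : v = N.root
    · subst hr
      have h1 := N.root_inDeg
      have h2 := N.root_outDeg
      omega
    · rcases N.degrees v hv hr with ⟨h1, h2⟩ | ⟨h1, h2⟩ | ⟨h1, h2⟩ <;> omega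
  · have h0 : degU N.G v = 0 := by
      unfold degU
      rw [Finset.card_eq_zero, Finset.filter_eq_empty_iff]
      intro e he
      rintro (h | h)
      · exact hv (h ▸ (N.G.edges_sub e he).1)
      · exact hv (h ▸ (N.G.edges_sub e he).2)
    omega

lemma region_vert_unique (N : PhyloNet V X) {B₁ B₂ : Dgraph V} (h₁ : IsRegion N B₁)
    (h₂ : IsRegion N B₂) {v : V} (hv₁ : v ∈ B₁.verts) (hv₂ : v ∈ B₂.verts) : B₁ = B₂ := by
  have hn₁ := noloop_of_sub (N := N) h₁.1.1.2
  have hn₂ := noloop_of_sub (N := N) h₂.1.1.2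
  obtain ⟨p₁, q₁, hp₁, hq₁, hpq₁, hpv₁, hqv₁⟩ := region_three N h₁ v
  obtain ⟨p₂, q₂, hp₂, hq₂, hpq₂, hpv₂, hqv₂⟩ := region_three N h₂ v
  have hdeg₁ : 2 ≤ degU B₁ v := bic_min_degree h₁.1.2.1 hn₁ hv₁ hp₁ hq₁
    (fun h => hpv₁ h.symm) (fun h => hqv₁ h.symm) hpq₁
  have hdeg₂ : 2 ≤ degU B₂ v := bic_min_degree h₂.1.2.1 hn₂ hv₂ hp₂ hq₂
    (fun h => hpv₂ h.symm) (fun h => hqv₂ h.symm) hpq₂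
  -- they share an edge
  have hshared : ∃ d, d ∈ B₁.edges ∧ d ∈ B₂.edges := by
    by_contra hdisj
    push_neg at hdisj
    have hdisj' : Disjoint (B₁.edges.filter (fun e => e.1 = v ∨ e.2 = v))
        (B₂.edges.filter (fun e => e.1 = v ∨ e.2 = v)) := by
      rw [Finset.disjoint_left]
      intro d hd1 hd2
      exact hdisj d (Finset.mem_filter.mp hd1).1 (Finset.mem_filter.mp hd2).1
    have hsubN : (B₁.edges.filter (fun e => e.1 = v ∨ e.2 = v)) ∪
        (B₂.edges.filter (fun e => e.1 = v ∨ e.2 = v)) ⊆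
        N.G.edges.filter (fun e => e.1 = v ∨ e.2 = v) := by
      intro d hd
      rcases Finset.mem_union.mp hd with h | h
      · exact Finset.filter_subset_filter _ h₁.1.1.2 h
      · exact Finset.filter_subset_filter _ h₂.1.1.2 h
    have hcard := Finset.card_le_card hsubN
    rw [Finset.card_union_of_disjoint hdisj'] at hcard
    have := degU_le_three N v
    unfold degU at this hdeg₁ hdeg₂
    omega
  obtain ⟨d, hd₁, hd₂⟩ := hshared
  have hdne : d.1 ≠ d.2 := hn₁ d hd₁
  have hU := bic_union h₁.1.2.1 h₂.1.2.1 (B₁.edges_sub d hd₁).1 (B₂.edges_sub d hd₂).1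
    (B₁.edges_sub d hd₁).2 (B₂.edges_sub d hd₂).2 hdne
  have hUsub : (B₁.gunion B₂).IsSubgraph N.G := by
    constructor
    · intro a ha
      rcases Finset.mem_union.mp ha with h | h
      · exact h₁.1.1.1 h
      · exact h₂.1.1.1 h
    · intro a ha
      rcases Finset.mem_union.mp ha with h | h
      · exact h₁.1.1.2 h
      · exact h₂.1.1.2 h
  have e₁ : B₁.gunion B₂ = B₁ := h₁.1.2.2 _ hUsub hU
    ⟨Finset.subset_union_left, Finset.subset_union_left⟩
  have e₂ : B₁.gunion B₂ = B₂ := h₂.1.2.2 _ hUsub hU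
    ⟨Finset.subset_union_right, Finset.subset_union_right⟩
  exact e₁.symm.trans e₂

def OnCycle (N : PhyloNet V X) (e : V × V) : Prop :=
  ∃ H : Dgraph V, H.IsSubgraph N.G ∧ H.Biconnected ∧ e ∈ H.edges ∧ 2 ≤ H.edges.card

lemma exists_region_of_onCycle (N : PhyloNet V X) {e : V × V} (h : OnCycle N e) :
    ∃ B, IsRegion N B ∧ e ∈ B.edges := by
  obtain ⟨H, hsub, hbic, he, hcard⟩ := h
  obtain ⟨M, hM, hHM⟩ := exists_max_bic N (N.G.verts.card + N.G.edges.card) H hsub hbic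
    (by omega)
  exact ⟨M, ⟨hM, le_trans hcard (Finset.card_le_card hHM.2)⟩, hHM.2 he⟩

def regionOf (N : PhyloNet V X) (e : V × V) : Dgraph V :=
  if h : OnCycle N e then Classical.choose (exists_region_of_onCycle N h)
  else ⟨∅, ∅, by intro d hd; exact absurd hd (Finset.notMem_empty d)⟩

lemma regionOf_spec (N : PhyloNet V X) {e : V × V} (h : OnCycle N e) :
    IsRegion N (regionOf N e) ∧ e ∈ (regionOf N e).edges := by
  rw [regionOf, dif_pos h]
  exact Classical.choose_spec (exists_region_of_onCycle N h)

lemma region_eq_regionOf (N : PhyloNet V X) {B : Dgraph V} (hB : IsRegion N B) {e : V × V}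
    (he : e ∈ B.edges) : B = regionOf N e := by
  have hOC : OnCycle N e := ⟨B, hB.1.1, hB.1.2.1, he, hB.2⟩
  obtain ⟨hreg, hmem⟩ := regionOf_spec N hOC
  exact region_vert_unique N hB hreg (B.edges_sub e he).1 ((regionOf N e).edges_sub e hmem).1

noncomputable def regionsF (N : PhyloNet V X) : Finset (Dgraph V) := by
  letI : DecidableEq (Dgraph V) := Classical.decEq _
  exact (N.G.edges.filter (OnCycle N)).image (regionOf N)

lemma mem_regionsF {N : PhyloNet V X} {B : Dgraph V} :
    B ∈ regionsF N ↔ IsRegion N B := by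
  letI : DecidableEq (Dgraph V) := Classical.decEq _
  unfold regionsF
  constructor
  · intro h
    simp only [Finset.mem_image] at h
    obtain ⟨e, he, rfl⟩ := h
    exact (regionOf_spec N (Finset.mem_filter.mp he).2).1
  · intro hB
    have hc2 := hB.2
    have hne : B.edges.Nonempty := by rw [← Finset.card_pos]; omega
    obtain ⟨e, he⟩ := hne
    have heN : e ∈ N.G.edges := hB.1.1.2 he
    have hOC : OnCycle N e := ⟨B, hB.1.1, hB.1.2.1, he, hB.2⟩
    simp only [Finset.mem_image]
    exact ⟨e, Finset.mem_filter.mpr ⟨heN, hOC⟩, (region_eq_regionOf N hB he).symm⟩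

/-- leaves and the root are not in regions -/
lemma leaf_not_in_region (N : PhyloNet V X) {B : Dgraph V} (hB : IsRegion N B) {v : V}
    (hv : v ∈ B.verts) : v ∉ X ∧ v ≠ N.root := by
  have hn := noloop_of_sub (N := N) hB.1.1.2
  obtain ⟨p, q, hp, hq, hpq, hpv, hqv⟩ := region_three N hB v
  have hdeg : 2 ≤ degU B v := bic_min_degree hB.1.2.1 hn hv hp hq
    (fun h => hpv h.symm) (fun h => hqv h.symm) hpq
  have hdegN : 2 ≤ degU N.G v := le_trans hdeg (degU_mono hB.1.1.2 v)
  have hvN : v ∈ N.G.verts := hB.1.1.1 hv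
  constructor
  · intro hx
    -- leaf: outDeg = 0, inDeg = 1
    have hout : N.G.outDeg v = 0 := by
      have hxl : v ∈ N.G.leaves := by rw [N.leaves_eq]; exact hx
      exact (Finset.mem_filter.mp hxl).2
    have hroot : v ≠ N.root := by
      intro h
      have := N.root_outDeg
      rw [← h] at this
      omega
    have hin : N.G.inDeg v ≤ 2 := inDeg_le_two N hvN
    have hsplit : degU N.G v ≤ N.G.inDeg v + N.G.outDeg v := degU_le_inout N.G v
    rcases N.degrees v hvN hroot with ⟨h1, h2⟩ | ⟨h1, h2⟩ | ⟨h1, h2⟩ <;> omega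
  · intro h
    have hsplit : degU N.G v ≤ N.G.inDeg v + N.G.outDeg v := degU_le_inout N.G v
    have h1 := N.root_inDeg
    have h2 := N.root_outDeg
    rw [← h] at h1 h2
    omega

/-! ### building walks avoiding an edge -/

lemma reach_minus (N : PhyloNet V X) (e : V × V) {a b : V} (h : N.G.Reaches a b) :
    ¬ N.G.Reaches e.2 b → Relation.ReflTransGen (adjMinus N e) a b := by
  induction h with
  | refl => intro _; exact Relation.ReflTransGen.refl
  | tail h1 h2 ih =>
    rename_i m c
    intro hnr
    have hnrm : ¬ N.G.Reaches e.2 m := fun hr => hnr (hr.tail h2)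
    have hne : (m, c) ≠ e := by
      intro heq
      exact hnr (by rw [← heq]; exact Relation.ReflTransGen.refl)
    exact (ih hnrm).tail ⟨(m, c), Finset.mem_erase.mpr ⟨hne, h2⟩, Or.inl rfl⟩

lemma reach_minus_from_head (N : PhyloNet V X) (e : V × V) {b : V}
    (h : N.G.Reaches e.2 b) : Relation.ReflTransGen (adjMinus N e) e.2 b := by
  have haux : ∀ {a b : V}, N.G.Reaches a b → N.G.Reaches e.2 a →
      Relation.ReflTransGen (adjMinus N e) a b := by
    intro a b hab
    induction hab with
    | refl => intro _; exact Relation.ReflTransGen.refl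
    | tail h1 h2 ih =>
      rename_i m c
      intro hra
      have hne : (m, c) ≠ e := by
        intro heq
        have hrm : N.G.Reaches e.2 m := hra.trans h1
        have : N.G.edgeRel m e.2 := by
          unfold Dgraph.edgeRel
          rw [show (m, e.2) = e by rw [← heq]]
          rw [← heq]
          exact h2
        exact N.acyclic m e.2 this hrm
      exact (ih hra).tail ⟨(m, c), Finset.mem_erase.mpr ⟨hne, h2⟩, Or.inl rfl⟩
  exact haux h Relation.ReflTransGen.refl

lemma exists_W_descendant (N : PhyloNet V X) {W : Finset V} (hW : X ⊆ W) :
    ∀ (n : ℕ) (v : V), descCard N v ≤ n → v ∈ N.G.verts →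
    ∃ z ∈ W, N.G.Reaches v z := by
  intro n
  induction n with
  | zero =>
    intro v hn hv
    by_cases hvW : v ∈ W
    · exact ⟨v, hvW, Relation.ReflTransGen.refl⟩
    · obtain ⟨w, hw⟩ := outDeg_pos N hv (fun hx => hvW (hW hx))
      have := descCard_lt N hw
      omega
  | succ n ih =>
    intro v hn hv
    by_cases hvW : v ∈ W
    · exact ⟨v, hvW, Relation.ReflTransGen.refl⟩
    · obtain ⟨w, hw⟩ := outDeg_pos N hv (fun hx => hvW (hW hx))
      have hlt := descCard_lt N hw
      obtain ⟨z, hz, hreach⟩ := ih w (by omega) (head_mem_of_edge hw)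
      exact ⟨z, hz, (Relation.ReflTransGen.single hw).trans hreach⟩

lemma edge_in_region_of_not_S' (N : PhyloNet V X) {S' : Dgraph V}
    (hI : TreeInv X N.root S') (hsub : S'.IsSubgraph N.G) {e : V × V}
    (he : e ∈ N.G.edges) (heS : e ∉ S'.edges) : ∃ B, IsRegion N B ∧ e ∈ B.edges := by
  -- walk from e.2 back to e.1 avoiding e
  have hS'path : ∀ z ∈ S'.verts, Relation.ReflTransGen (adjMinus N e) N.root z := by
    intro z hz
    refine rtg_mono ?_ (hI.reach z hz)
    intro a b hab
    exact ⟨(a, b), Finset.mem_erase.mpr ⟨fun h => heS (h ▸ hab), hsub.2 hab⟩, Or.inl rfl⟩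
  obtain ⟨z, hz, hreach⟩ := exists_W_descendant N hI.X_sub (descCard N e.2) e.2 le_rfl
    (head_mem_of_edge he)
  have W1 : Relation.ReflTransGen (adjMinus N e) e.2 z := reach_minus_from_head N e hreach
  have W2 : Relation.ReflTransGen (adjMinus N e) z N.root :=
    rtg_symm (fun _ _ h => adjMinus_symm N e h) (hS'path z hz)
  have W3 : Relation.ReflTransGen (adjMinus N e) N.root e.1 := by
    refine reach_minus N e (N.reach e.1 (tail_mem_of_edge he)) ?_
    exact N.acyclic e.1 e.2 he
  obtain ⟨Cg, h1, h2, h3, h4⟩ := exists_bic_of_cycleWalk N e he ((W1.trans W2).trans W3)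
  exact exists_region_of_onCycle N ⟨Cg, h1, h2, h3, h4⟩

lemma retic_in_edge_region (N : PhyloNet V X) {d : V × V} (hd : d ∈ N.G.edges)
    (hret : N.IsRetic d.2) : ∃ B, IsRegion N B ∧ d ∈ B.edges := by
  -- find the other in-edge
  have hcard : (N.G.edges.filter (fun e => e.2 = d.2)).card = 2 := hret
  have h2 : ∃ d', d' ∈ N.G.edges.filter (fun e => e.2 = d.2) ∧ d' ≠ d := by
    obtain ⟨a, ha, b, hb, hne⟩ := Finset.one_lt_card.mp (by omega : 1 <
      (N.G.edges.filter (fun e => e.2 = d.2)).card)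
    by_cases had : a = d
    · exact ⟨b, hb, fun h => hne (had.trans h.symm)⟩
    · exact ⟨a, ha, had⟩
  obtain ⟨d', hd', hne⟩ := h2
  have hd'' := Finset.mem_filter.mp hd'
  -- walk: d.2 →(d') d'.1 ⇝ root ⇝ d.1
  have W1 : Relation.ReflTransGen (adjMinus N d) d.2 d'.1 := by
    refine Relation.ReflTransGen.single ?_
    refine ⟨d', Finset.mem_erase.mpr ⟨hne, hd''.1⟩, Or.inr ?_⟩
    rw [← hd''.2]
  have W2 : Relation.ReflTransGen (adjMinus N d) d'.1 N.root := by
    refine rtg_symm (fun _ _ h => adjMinus_symm N d h) ?_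
    refine reach_minus N d (N.reach d'.1 (tail_mem_of_edge hd''.1)) ?_
    intro hr
    have : N.G.edgeRel d'.1 d.2 := by
      unfold Dgraph.edgeRel
      rw [show (d'.1, d.2) = d' from Prod.ext rfl hd''.2.symm]
      exact hd''.1
    exact N.acyclic d'.1 d.2 this hr
  have W3 : Relation.ReflTransGen (adjMinus N d) N.root d.1 := by
    refine reach_minus N d (N.reach d.1 (tail_mem_of_edge hd)) ?_
    exact N.acyclic d.1 d.2 hd
  obtain ⟨Cg, h1, h2, h3, h4⟩ := exists_bic_of_cycleWalk N d hd ((W1.trans W2).trans W3)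
  exact exists_region_of_onCycle N ⟨Cg, h1, h2, h3, h4⟩

end Development7
section Development8

open Finset

variable {V C : Type} {X : Finset V}

/-- every region contains a reticulation -/
lemma region_has_retic (N : PhyloNet V X) {B : Dgraph V} (hB : IsRegion N B) :
    ∃ v ∈ B.verts, N.IsRetic v := by
  have hnonempty : B.verts.Nonempty := by
    obtain ⟨p, q, hp, _, _, _, _⟩ := region_three N hB (N.root)
    exact ⟨p, hp⟩
  obtain ⟨v, hv, hmin⟩ := Finset.exists_min_image B.verts (descCard N) hnonempty
  have hnoout : ∀ w, (v, w) ∉ B.edges := by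
    intro w hw
    have hwB : w ∈ B.verts := (B.edges_sub _ hw).2
    have hlt := descCard_lt N (hB.1.1.2 hw)
    have := hmin w hwB
    omega
  obtain ⟨p, q, hp, hq, hpq, hpv, hqv⟩ := region_three N hB v
  have hdeg : 2 ≤ degU B v := bic_min_degree hB.1.2.1 (noloop_of_sub (N := N) hB.1.1.2)
    hv hp hq (fun h => hpv h.symm) (fun h => hqv h.symm) hpq
  have hsub : B.edges.filter (fun e => e.1 = v ∨ e.2 = v) ⊆
      B.edges.filter (fun e => e.2 = v) := by
    intro d hd
    have hd' := Finset.mem_filter.mp hd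
    rcases hd'.2 with h | h
    · exfalso
      exact hnoout d.2 (by rw [show (v, d.2) = d from Prod.ext h.symm rfl]; exact hd'.1)
    · exact Finset.mem_filter.mpr ⟨hd'.1, h⟩
  have hinB : 2 ≤ B.inDeg v := by
    unfold Dgraph.inDeg
    unfold degU at hdeg
    exact le_trans hdeg (Finset.card_le_card hsub)
  have hinN : 2 ≤ N.G.inDeg v := le_trans hinB (inDeg_mono hB.1.1.2 v)
  exact ⟨v, hv, retic_of_inDeg_ge_two N (hB.1.1.1 hv) hinN⟩

lemma mem_blobChildren (N : PhyloNet V X) {B : Dgraph V} {u w : V} (hu : u ∈ B.verts)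
    (hw : w ∉ B.verts) (he : (u, w) ∈ N.G.edges) : w ∈ N.blobChildren B := by
  unfold PhyloNet.blobChildren
  exact Finset.mem_filter.mpr ⟨head_mem_of_edge he, hw, u, hu, he⟩

lemma blobChildren_F'_val {N : PhyloNet V X} {B : Dgraph V} {F' : V → C}
    (hsame : SameOnChildren N B F') {a b : V} (ha : a ∈ N.blobChildren B)
    (hb : b ∈ N.blobChildren B) : F' a = F' b := hsame a ha b hb

/-- from any region vertex there is a blob child -/
lemma region_child_nonempty (N : PhyloNet V X) {B : Dgraph V} (hB : IsRegion N B) :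
    (N.blobChildren B).Nonempty := by
  have hstep : ∀ (n : ℕ) (v : V), descCard N v ≤ n → v ∈ B.verts →
      (N.blobChildren B).Nonempty := by
    intro n
    induction n with
    | zero =>
      intro v hn hv
      have hvN : v ∈ N.G.verts := hB.1.1.1 hv
      have hvX : v ∉ X := (leaf_not_in_region N hB hv).1
      obtain ⟨w, hw⟩ := outDeg_pos N hvN hvX
      have := descCard_lt N hw
      omega
    | succ n ih =>
      intro v hn hv
      have hvN : v ∈ N.G.verts := hB.1.1.1 hv
      have hvX : v ∉ X := (leaf_not_in_region N hB hv).1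
      obtain ⟨w, hw⟩ := outDeg_pos N hvN hvX
      by_cases hwB : w ∈ B.verts
      · have := descCard_lt N hw
        exact ih w (by omega) hwB
      · exact ⟨w, mem_blobChildren N hv hwB hw⟩
  obtain ⟨p, q, hp, _, _, _, _⟩ := region_three N hB N.root
  exact hstep (descCard N p) p le_rfl hp

/-- the in-edges of a reticulation in a region all belong to that region -/
lemma retic_in_edges_in_region (N : PhyloNet V X) {B : Dgraph V} (hB : IsRegion N B)
    {z : V} (hz : z ∈ B.verts) (hret : N.IsRetic z) :
    ∀ d ∈ N.G.edges, d.2 = z → d ∈ B.edges := by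
  intro d hd hd2
  obtain ⟨B', hB', hdB'⟩ := retic_in_edge_region N hd (by rw [hd2]; exact hret)
  have : B' = B := region_vert_unique N hB' hB (by rw [← hd2]; exact (B'.edges_sub d hdB').2) hz
  rw [← this]
  exact hdB'

/-- every reticulation lies in some region -/
lemma retic_in_region (N : PhyloNet V X) {z : V} (hz : z ∈ N.G.verts)
    (hret : N.IsRetic z) : ∃ B, IsRegion N B ∧ z ∈ B.verts := by
  have hpos : 0 < N.G.inDeg z := by
    have : N.G.inDeg z = 2 := hret
    omega
  have : (N.G.edges.filter (fun e => e.2 = z)).Nonempty := by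
    rw [← Finset.card_pos]; exact hpos
  obtain ⟨d, hd⟩ := this
  have hd' := Finset.mem_filter.mp hd
  obtain ⟨B, hB, hdB⟩ := retic_in_edge_region N hd'.1 (by rw [hd'.2]; exact hret)
  exact ⟨B, hB, by rw [← hd'.2]; exact (B.edges_sub d hdB).2⟩

/-- entry edges into a region: they are in S' and their heads are not reticulations;
moreover distinct entry edges have distinct heads -/
lemma entry_edge_props (N : PhyloNet V X) {S' : Dgraph V} (hI : TreeInv X N.root S')
    (hsub : S'.IsSubgraph N.G) {B : Dgraph V} (hB : IsRegion N B) {e : V × V}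
    (he : e ∈ N.G.edges) (h2 : e.2 ∈ B.verts) (h1 : e.1 ∉ B.verts) :
    e ∈ S'.edges ∧ ¬ N.IsRetic e.2 := by
  have hnotinB : ∀ B' , IsRegion N B' → e ∉ B'.edges := by
    intro B' hB' heB'
    have : B' = B := region_vert_unique N hB' hB (B'.edges_sub e heB').2 h2
    rw [this] at heB'
    exact h1 (B.edges_sub e heB').1
  constructor
  · by_contra heS
    obtain ⟨B', hB', heB'⟩ := edge_in_region_of_not_S' N hI hsub he heS
    exact hnotinB B' hB' heB'
  · intro hret
    obtain ⟨B', hB', heB'⟩ := retic_in_edge_region N he hret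
    exact hnotinB B' hB' heB'

lemma entry_head_unique (N : PhyloNet V X) {S' : Dgraph V} (hI : TreeInv X N.root S')
    (hsub : S'.IsSubgraph N.G) {B : Dgraph V} (hB : IsRegion N B) {e e' : V × V}
    (he : e ∈ N.G.edges) (h2 : e.2 ∈ B.verts) (h1 : e.1 ∉ B.verts)
    (he' : e' ∈ N.G.edges) (h2' : e'.2 ∈ B.verts) (h1' : e'.1 ∉ B.verts)
    (hheads : e.2 = e'.2) : e = e' := by
  have hnr := (entry_edge_props N hI hsub hB he h2 h1).2
  have hvN : e.2 ∈ N.G.verts := hB.1.1.1 h2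
  have hroot : e.2 ≠ N.root := (leaf_not_in_region N hB h2).2
  have hinone : N.G.inDeg e.2 = 1 := inDeg_of_nonretic N hvN hroot hnr
  have hm1 : e ∈ N.G.edges.filter (fun d => d.2 = e.2) := Finset.mem_filter.mpr ⟨he, rfl⟩
  have hm2 : e' ∈ N.G.edges.filter (fun d => d.2 = e.2) :=
    Finset.mem_filter.mpr ⟨he', hheads.symm⟩
  exact Finset.card_le_one.mp (by unfold Dgraph.inDeg at hinone; omega) _ hm1 _ hm2

/-- a vertex not in S' lies in a region, and all its incident edges are in that region -/
lemma nonS'_vert_region (N : PhyloNet V X) {S' : Dgraph V} (hI : TreeInv X N.root S')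
    (hsub : S'.IsSubgraph N.G) {v : V} (hv : v ∈ N.G.verts) (hvS : v ∉ S'.verts) :
    ∃ B, IsRegion N B ∧ v ∈ B.verts := by
  have hvr : v ≠ N.root := fun h => hvS (h ▸ hI.root_mem)
  obtain ⟨u, hu⟩ := exists_in_edge N hv hvr
  have huS : (u, v) ∉ S'.edges := fun h => hvS (S'.edges_sub _ h).2
  obtain ⟨B, hB, hdB⟩ := edge_in_region_of_not_S' N hI hsub hu huS
  exact ⟨B, hB, (B.edges_sub _ hdB).2⟩

lemma edge_at_nonS'_in_region (N : PhyloNet V X) {S' : Dgraph V}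
    (hI : TreeInv X N.root S') (hsub : S'.IsSubgraph N.G) {B : Dgraph V}
    (hB : IsRegion N B) {v : V} (hv : v ∈ B.verts) (hvS : v ∉ S'.verts) {d : V × V}
    (hd : d ∈ N.G.edges) (hdv : d.1 = v ∨ d.2 = v) : d ∈ B.edges := by
  have hdS : d ∉ S'.edges := by
    intro h
    rcases hdv with h1 | h1
    · exact hvS (h1 ▸ (S'.edges_sub _ h).1)
    · exact hvS (h1 ▸ (S'.edges_sub _ h).2)
  obtain ⟨B', hB', hdB'⟩ := edge_in_region_of_not_S' N hI hsub hd hdS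
  have hvB' : v ∈ B'.verts := by
    rcases hdv with h1 | h1
    · exact h1 ▸ (B'.edges_sub _ hdB').1
    · exact h1 ▸ (B'.edges_sub _ hdB').2
  rw [← region_vert_unique N hB' hB hvB' hv]
  exact hdB'

end Development8
section Development9

open Finset

variable {V C : Type} {X : Finset V}

lemma regions_edge_disjoint (N : PhyloNet V X) {B B' : Dgraph V} (hB : IsRegion N B)
    (hB' : IsRegion N B') (hne : B ≠ B') : Disjoint B.edges B'.edges := by
  rw [Finset.disjoint_left]
  intro d hd hd'
  exact hne (region_vert_unique N hB hB' (B.edges_sub d hd).1 (B'.edges_sub d hd').1)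

lemma regions_vert_disjoint (N : PhyloNet V X) {B B' : Dgraph V} (hB : IsRegion N B)
    (hB' : IsRegion N B') (hne : B ≠ B') : Disjoint B.verts B'.verts := by
  rw [Finset.disjoint_left]
  intro v hv hv'
  exact hne (region_vert_unique N hB hB' hv hv')

lemma sum_regions_edges (N : PhyloNet V X) {S' : Dgraph V} (hI : TreeInv X N.root S')
    (hsub : S'.IsSubgraph N.G) :
    ∑ B ∈ regionsF N, (B.edges \ S'.edges).card = (N.G.edges \ S'.edges).card := by
  rw [← Finset.card_biUnion]
  · congr 1
    ext d
    simp only [Finset.mem_biUnion, Finset.mem_sdiff]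
    constructor
    · rintro ⟨B, hB, hd⟩
      have hB' := mem_regionsF.mp hB
      exact ⟨hB'.1.1.2 hd.1, hd.2⟩
    · rintro ⟨hdN, hdS⟩
      obtain ⟨B, hB, hdB⟩ := edge_in_region_of_not_S' N hI hsub hdN hdS
      exact ⟨B, mem_regionsF.mpr hB, hdB, hdS⟩
  · intro B hB B' hB' hne
    have hd := regions_edge_disjoint N (mem_regionsF.mp hB) (mem_regionsF.mp hB') hne
    rw [Finset.disjoint_left] at hd
    rw [Function.onFun, Finset.disjoint_left]
    intro d h1 h2
    exact hd (Finset.mem_sdiff.mp h1).1 (Finset.mem_sdiff.mp h2).1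

lemma sum_regions_verts (N : PhyloNet V X) {S' : Dgraph V} (hI : TreeInv X N.root S')
    (hsub : S'.IsSubgraph N.G) :
    ∑ B ∈ regionsF N, (B.verts \ S'.verts).card = (N.G.verts \ S'.verts).card := by
  rw [← Finset.card_biUnion]
  · congr 1
    ext v
    simp only [Finset.mem_biUnion, Finset.mem_sdiff]
    constructor
    · rintro ⟨B, hB, hv⟩
      have hB' := mem_regionsF.mp hB
      exact ⟨hB'.1.1.1 hv.1, hv.2⟩
    · rintro ⟨hvN, hvS⟩
      obtain ⟨B, hB, hvB⟩ := nonS'_vert_region N hI hsub hvN hvS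
      exact ⟨B, mem_regionsF.mpr hB, hvB, hvS⟩
  · intro B hB B' hB' hne
    have hd := regions_vert_disjoint N (mem_regionsF.mp hB) (mem_regionsF.mp hB') hne
    rw [Finset.disjoint_left] at hd
    rw [Function.onFun, Finset.disjoint_left]
    intro v h1 h2
    exact hd (Finset.mem_sdiff.mp h1).1 (Finset.mem_sdiff.mp h2).1

lemma sum_regions_retics (N : PhyloNet V X) :
    ∑ B ∈ regionsF N, (B.verts.filter (fun v => N.IsRetic v)).card = N.numRetic := by
  unfold PhyloNet.numRetic
  rw [← Finset.card_biUnion]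
  · congr 1
    ext v
    simp only [Finset.mem_biUnion, Finset.mem_filter]
    constructor
    · rintro ⟨B, hB, hv⟩
      have hB' := mem_regionsF.mp hB
      exact ⟨hB'.1.1.1 hv.1, hv.2⟩
    · rintro ⟨hvN, hret⟩
      obtain ⟨B, hB, hvB⟩ := retic_in_region N hvN hret
      exact ⟨B, mem_regionsF.mpr hB, hvB, hret⟩
  · intro B hB B' hB' hne
    have hd := regions_vert_disjoint N (mem_regionsF.mp hB) (mem_regionsF.mp hB') hne
    rw [Finset.disjoint_left] at hd
    rw [Function.onFun, Finset.disjoint_left]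
    intro v h1 h2
    exact hd (Finset.mem_filter.mp h1).1 (Finset.mem_filter.mp h2).1

/-- per-region lower bound on the number of non-`S'` edges -/
lemma region_lower (N : PhyloNet V X) {S' : Dgraph V} (hI : TreeInv X N.root S')
    (hsub : S'.IsSubgraph N.G) {B : Dgraph V} (hB : IsRegion N B) :
    (B.verts \ S'.verts).card + (B.verts.filter (fun v => N.IsRetic v)).card ≤
      (B.edges \ S'.edges).card := by
  have hfib : (B.edges \ S'.edges).card =
      ∑ v ∈ B.verts, ((B.edges \ S'.edges).filter (fun d => d.2 = v)).card :=
    Finset.card_eq_sum_card_fiberwise (fun d hd =>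
      (B.edges_sub d (Finset.mem_sdiff.mp hd).1).2)
  have hquota : ∀ v ∈ B.verts,
      (if v ∈ S'.verts then 0 else 1) + (if N.IsRetic v then 1 else 0) ≤
      ((B.edges \ S'.edges).filter (fun d => d.2 = v)).card := by
    intro v hv
    have hvN : v ∈ N.G.verts := hB.1.1.1 hv
    have hvr : v ≠ N.root := (leaf_not_in_region N hB hv).2
    by_cases hvS : v ∈ S'.verts
    · by_cases hret : N.IsRetic v
      · -- need ≥ 1 : two in-edges in B, at most one in S'
        simp only [if_pos hvS, if_pos hret, zero_add]
        have hall : N.G.edges.filter (fun d => d.2 = v) ⊆ B.edges :=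
          fun d hd => retic_in_edges_in_region N hB hv hret d
            (Finset.mem_filter.mp hd).1 (Finset.mem_filter.mp hd).2
        have hsplit : ((N.G.edges.filter (fun d => d.2 = v)) \ S'.edges).card +
            ((N.G.edges.filter (fun d => d.2 = v)) ∩ S'.edges).card =
            (N.G.edges.filter (fun d => d.2 = v)).card :=
          Finset.card_sdiff_add_card_inter _ _
        have hcard2 : (N.G.edges.filter (fun d => d.2 = v)).card = 2 := hret
        have hinterS : (N.G.edges.filter (fun d => d.2 = v)) ∩ S'.edges ⊆
            S'.edges.filter (fun d => d.2 = v) := by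
          intro d hd
          have hd' := Finset.mem_inter.mp hd
          exact Finset.mem_filter.mpr ⟨hd'.2, (Finset.mem_filter.mp hd'.1).2⟩
        have hS1 : (S'.edges.filter (fun d => d.2 = v)).card ≤ 1 := hI.indeg_le v
        have hinter1 := (Finset.card_le_card hinterS).trans hS1
        have hsub2 : (N.G.edges.filter (fun d => d.2 = v)) \ S'.edges ⊆
            (B.edges \ S'.edges).filter (fun d => d.2 = v) := by
          intro d hd
          have hd' := Finset.mem_sdiff.mp hd
          exact Finset.mem_filter.mpr ⟨Finset.mem_sdiff.mpr ⟨hall hd'.1, hd'.2⟩,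
            (Finset.mem_filter.mp hd'.1).2⟩
        have := Finset.card_le_card hsub2
        omega
      · simp only [if_pos hvS, if_neg hret]; omega
    · -- v not in S' : all its in-edges are in B and outside S'
      have hge1 : ∃ d, d ∈ (B.edges \ S'.edges).filter (fun d => d.2 = v) := by
        obtain ⟨u, hu⟩ := exists_in_edge N hvN hvr
        have hdB : (u, v) ∈ B.edges :=
          edge_at_nonS'_in_region N hI hsub hB hv hvS hu (Or.inr rfl)
        have hdS : (u, v) ∉ S'.edges := fun h => hvS (S'.edges_sub _ h).2
        exact ⟨(u, v), Finset.mem_filter.mpr ⟨Finset.mem_sdiff.mpr ⟨hdB, hdS⟩, rfl⟩⟩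
      by_cases hret : N.IsRetic v
      · -- need ≥ 2
        simp only [if_neg hvS, if_pos hret]
        have hall : N.G.edges.filter (fun d => d.2 = v) ⊆
            (B.edges \ S'.edges).filter (fun d => d.2 = v) := by
          intro d hd
          have hd' := Finset.mem_filter.mp hd
          have hdB : d ∈ B.edges := edge_at_nonS'_in_region N hI hsub hB hv hvS hd'.1
            (Or.inr hd'.2)
          have hdS : d ∉ S'.edges := fun h => hvS (hd'.2 ▸ (S'.edges_sub _ h).2)
          exact Finset.mem_filter.mpr ⟨Finset.mem_sdiff.mpr ⟨hdB, hdS⟩, hd'.2⟩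
        have hcard2 : (N.G.edges.filter (fun d => d.2 = v)).card = 2 := hret
        have := Finset.card_le_card hall
        omega
      · simp only [if_neg hvS, if_neg hret]
        obtain ⟨d, hd⟩ := hge1
        have : 0 < ((B.edges \ S'.edges).filter (fun d => d.2 = v)).card :=
          Finset.card_pos.mpr ⟨d, hd⟩
        omega
  have hsum := Finset.sum_le_sum hquota
  rw [← hfib] at hsum
  have hsplit : ∑ v ∈ B.verts, ((if v ∈ S'.verts then 0 else 1) +
      (if N.IsRetic v then 1 else 0)) =
      (B.verts \ S'.verts).card + (B.verts.filter (fun v => N.IsRetic v)).card := by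
    rw [Finset.sum_add_distrib]
    congr 1
    · rw [Finset.sdiff_eq_filter, Finset.card_filter]
      apply Finset.sum_congr rfl
      intro x hx
      by_cases h : x ∈ S'.verts <;> simp [h]
    · rw [Finset.card_filter]
  rw [hsplit] at hsum
  exact hsum

end Development9
section Development10

open Finset

variable {V C : Type} {X : Finset V}

noncomputable def nextS (S' : Dgraph V) (v : V) : V :=
  if h : ∃ w, (v, w) ∈ S'.edges then Classical.choose h else v

lemma nextS_spec {S' : Dgraph V} {v : V} (h : ∃ w, (v, w) ∈ S'.edges) :
    (v, nextS S' v) ∈ S'.edges := by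
  rw [nextS, dif_pos h]
  exact Classical.choose_spec h

noncomputable def nextN (N : PhyloNet V X) (v : V) : V :=
  if h : ∃ w, (v, w) ∈ N.G.edges then Classical.choose h else v

lemma nextN_spec {N : PhyloNet V X} {v : V} (h : ∃ w, (v, w) ∈ N.G.edges) :
    (v, nextN N v) ∈ N.G.edges := by
  rw [nextN, dif_pos h]
  exact Classical.choose_spec h

noncomputable def pathB (N : PhyloNet V X) (S' B : Dgraph V) (hI : TreeInv X N.root S')
    (hsub : S'.IsSubgraph N.G) (v : V) : List V :=
  if h : v ∈ B.verts ∧ v ∈ S'.verts ∧ v ∉ X then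
    v :: pathB N S' B hI hsub (nextS S' v)
  else [v]
termination_by descCard N v
decreasing_by
  exact descCard_lt N (hsub.2 (nextS_spec (hI.exists_out h.2.1 h.2.2)))

lemma pathB_eq (N : PhyloNet V X) (S' B : Dgraph V) (hI : TreeInv X N.root S')
    (hsub : S'.IsSubgraph N.G) (v : V) :
    pathB N S' B hI hsub v = if v ∈ B.verts ∧ v ∈ S'.verts ∧ v ∉ X then
      v :: pathB N S' B hI hsub (nextS S' v) else [v] := by
  rw [pathB]
  split <;> rfl

noncomputable def chainVal (N : PhyloNet V X) (S' : Dgraph V) (F' : V → C) (v : V) : C :=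
  if v ∈ S'.verts then F' v
  else if h : ∃ w, (v, w) ∈ N.G.edges then chainVal N S' F' (nextN N v)
  else F' v
termination_by descCard N v
decreasing_by
  exact descCard_lt N (nextN_spec h)

lemma chainVal_mem {N : PhyloNet V X} {S' : Dgraph V} {F' : V → C} {v : V}
    (h : v ∈ S'.verts) : chainVal N S' F' v = F' v := by
  rw [chainVal, if_pos h]

lemma chainVal_step {N : PhyloNet V X} {S' : Dgraph V} {F' : V → C} {v : V}
    (h : v ∉ S'.verts) (h2 : ∃ w, (v, w) ∈ N.G.edges) :
    chainVal N S' F' v = chainVal N S' F' (nextN N v) := by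
  rw [chainVal, if_neg h, dif_pos h2]

end Development10
section Development11

open Finset

variable {V C : Type} {X : Finset V}

def pStep (S' B : Dgraph V) (a b : V) : Prop :=
  b = nextS S' a ∧ (a, b) ∈ S'.edges ∧ a ∈ B.verts

lemma pathB_cons (N : PhyloNet V X) (S' B : Dgraph V) (hI : TreeInv X N.root S')
    (hsub : S'.IsSubgraph N.G) (v : V) : ∃ t, pathB N S' B hI hsub v = v :: t := by
  rw [pathB_eq]
  split
  · exact ⟨_, rfl⟩
  · exact ⟨[], rfl⟩

lemma pathB_head (N : PhyloNet V X) (S' B : Dgraph V) (hI : TreeInv X N.root S')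
    (hsub : S'.IsSubgraph N.G) (v : V) : (pathB N S' B hI hsub v).head? = some v := by
  obtain ⟨t, ht⟩ := pathB_cons N S' B hI hsub v
  rw [ht]; rfl

lemma pathB_ne_nil (N : PhyloNet V X) (S' B : Dgraph V) (hI : TreeInv X N.root S')
    (hsub : S'.IsSubgraph N.G) (v : V) : pathB N S' B hI hsub v ≠ [] := by
  obtain ⟨t, ht⟩ := pathB_cons N S' B hI hsub v
  rw [ht]; exact List.cons_ne_nil _ _

/-- main structural properties of `pathB` -/
lemma pathB_props (N : PhyloNet V X) (S' B : Dgraph V) (hI : TreeInv X N.root S')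
    (hsub : S'.IsSubgraph N.G) (hB : IsRegion N B) :
    ∀ (n : ℕ) (v : V), descCard N v ≤ n → v ∈ S'.verts →
      List.Chain' (pStep S' B) (pathB N S' B hI hsub v) ∧
      (∀ a ∈ pathB N S' B hI hsub v, a ∈ S'.verts) ∧
      (∀ w, (pathB N S' B hI hsub v).getLast? = some w → w ∉ B.verts ∧ w ∈ S'.verts) := by
  intro n
  induction n with
  | zero =>
    intro v hn hv
    rw [pathB_eq]
    have hcond : ¬ (v ∈ B.verts ∧ v ∈ S'.verts ∧ v ∉ X) := by
      rintro ⟨h1, h2, h3⟩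
      have := descCard_lt N (hsub.2 (nextS_spec (hI.exists_out h2 h3)))
      omega
    rw [if_neg hcond]
    refine ⟨List.isChain_singleton v, by simpa using hv, ?_⟩
    intro w hw
    simp only [List.getLast?_singleton, Option.some_inj] at hw
    subst hw
    refine ⟨?_, hv⟩
    intro hvB
    exact hcond ⟨hvB, hv, (leaf_not_in_region N hB hvB).1⟩
  | succ n ih =>
    intro v hn hv
    rw [pathB_eq]
    by_cases hcond : v ∈ B.verts ∧ v ∈ S'.verts ∧ v ∉ X
    · rw [if_pos hcond]
      have hedge : (v, nextS S' v) ∈ S'.edges := nextS_spec (hI.exists_out hcond.2.1 hcond.2.2)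
      have hnextS : nextS S' v ∈ S'.verts := (S'.edges_sub _ hedge).2
      have hdec := descCard_lt N (hsub.2 hedge)
      obtain ⟨hch, hmem, hlast⟩ := ih (nextS S' v) (by omega) hnextS
      refine ⟨?_, ?_, ?_⟩
      · rw [List.Chain', List.isChain_cons]
        refine ⟨?_, hch⟩
        intro y hy
        rw [pathB_head N S' B hI hsub (nextS S' v)] at hy
        injection hy with hy
        subst hy
        exact ⟨rfl, hedge, hcond.1⟩
      · intro a ha
        rcases List.mem_cons.mp ha with rfl | ha
        · exact hv
        · exact hmem a ha
      · intro w hw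
        obtain ⟨t, ht⟩ := pathB_cons N S' B hI hsub (nextS S' v)
        rw [ht, List.getLast?_cons_cons] at hw
        refine hlast w ?_
        rw [ht]
        exact hw
    · rw [if_neg hcond]
      refine ⟨List.isChain_singleton v, by simpa using hv, ?_⟩
      intro w hw
      simp only [List.getLast?_singleton, Option.some_inj] at hw
      subst hw
      refine ⟨?_, hv⟩
      intro hvB
      exact hcond ⟨hvB, hv, (leaf_not_in_region N hB hvB).1⟩

/-- suffix decomposition -/
lemma pathB_suffix (N : PhyloNet V X) (S' B : Dgraph V) (hI : TreeInv X N.root S')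
    (hsub : S'.IsSubgraph N.G) :
    ∀ (n : ℕ) (v : V), descCard N v ≤ n → ∀ a ∈ pathB N S' B hI hsub v,
      ∃ p, pathB N S' B hI hsub v = p ++ pathB N S' B hI hsub a := by
  intro n
  induction n with
  | zero =>
    intro v hn a ha
    rw [pathB_eq] at ha ⊢
    have hcond : ¬ (v ∈ B.verts ∧ v ∈ S'.verts ∧ v ∉ X) := by
      rintro ⟨h1, h2, h3⟩
      have := descCard_lt N (hsub.2 (nextS_spec (hI.exists_out h2 h3)))
      omega
    rw [if_neg hcond] at ha ⊢
    rcases List.mem_singleton.mp ha with rfl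
    exact ⟨[], by rw [pathB_eq, if_neg hcond]; rfl⟩
  | succ n ih =>
    intro v hn a ha
    by_cases hcond : v ∈ B.verts ∧ v ∈ S'.verts ∧ v ∉ X
    · rw [pathB_eq, if_pos hcond] at ha
      rcases List.mem_cons.mp ha with rfl | ha
      · exact ⟨[], rfl⟩
      · have hedge : (v, nextS S' v) ∈ S'.edges :=
          nextS_spec (hI.exists_out hcond.2.1 hcond.2.2)
        have hdec := descCard_lt N (hsub.2 hedge)
        obtain ⟨p, hp⟩ := ih (nextS S' v) (by omega) a ha
        refine ⟨v :: p, ?_⟩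
        rw [pathB_eq, if_pos hcond, hp]
        rfl
    · rw [pathB_eq, if_neg hcond] at ha
      rcases List.mem_singleton.mp ha with rfl
      exact ⟨[], rfl⟩

/-- entry heads have no `S'`-in-edge from inside the region -/
lemma entry_no_inner_in_edge (N : PhyloNet V X) {S' B : Dgraph V}
    (hI : TreeInv X N.root S') (hsub : S'.IsSubgraph N.G) (hB : IsRegion N B) {s t : V}
    (hsB : s ∈ B.verts) (hte : (t, s) ∈ N.G.edges) (htB : t ∉ B.verts) :
    ∀ z ∈ B.verts, (z, s) ∉ S'.edges := by
  intro z hz hzs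
  have hzsN : (z, s) ∈ N.G.edges := hsub.2 hzs
  have hzt : z ≠ t := fun h => htB (h ▸ hz)
  have hnr := (entry_edge_props N hI hsub hB hte hsB htB).2
  have h2 : 2 ≤ N.G.inDeg s := by
    unfold Dgraph.inDeg
    refine Finset.one_lt_card.mpr ⟨(z, s), ?_, (t, s), ?_, ?_⟩
    · exact Finset.mem_filter.mpr ⟨hzsN, rfl⟩
    · exact Finset.mem_filter.mpr ⟨hte, rfl⟩
    · intro h
      exact hzt (congrArg Prod.fst h)
  exact hnr (retic_of_inDeg_ge_two N (hB.1.1.1 hsB) h2)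

/-- injectivity: two entry heads with intersecting paths are equal -/
lemma pathB_inj (N : PhyloNet V X) {S' B : Dgraph V} (hI : TreeInv X N.root S')
    (hsub : S'.IsSubgraph N.G) (hB : IsRegion N B) {s₁ s₂ : V}
    (h₁B : s₁ ∈ B.verts) (h₁S : s₁ ∈ S'.verts) (h₁e : ∃ t, (t, s₁) ∈ N.G.edges ∧ t ∉ B.verts)
    (h₂B : s₂ ∈ B.verts) (h₂S : s₂ ∈ S'.verts) (h₂e : ∃ t, (t, s₂) ∈ N.G.edges ∧ t ∉ B.verts) :
    ∀ (n : ℕ) (p₁ p₂ : List V) (a : V), p₁.length + p₂.length ≤ n →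
      pathB N S' B hI hsub s₁ = p₁ ++ pathB N S' B hI hsub a →
      pathB N S' B hI hsub s₂ = p₂ ++ pathB N S' B hI hsub a → s₁ = s₂ := by
  have hhead : ∀ v a (p : List V), pathB N S' B hI hsub v = p ++ pathB N S' B hI hsub a →
      p = [] → v = a := by
    intro v a p hp hpnil
    subst hpnil
    rw [List.nil_append] at hp
    have h1 := pathB_head N S' B hI hsub v
    have h2 := pathB_head N S' B hI hsub a
    rw [hp, h2] at h1
    injection h1 with h1
    exact h1.symm
  have hlaststep : ∀ (v a : V) (p : List V) (hpne : p ≠ []), v ∈ S'.verts →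
      pathB N S' B hI hsub v = p ++ pathB N S' B hI hsub a →
      pStep S' B (p.getLast hpne) a := by
    intro v a p hpne hvS hp
    have hch := (pathB_props N S' B hI hsub hB (descCard N v) v le_rfl hvS).1
    rw [hp] at hch
    have hkey := (List.isChain_append.mp hch).2.2
    refine hkey _ ?_ a ?_
    · simp [List.getLast?_eq_getLast hpne, Option.mem_def]
    · simp [pathB_head N S' B hI hsub a, Option.mem_def]
  intro n
  induction n with
  | zero =>
    intro p₁ p₂ a hlen hp₁ hp₂
    have : p₁ = [] := List.length_eq_zero_iff.mp (by omega)
    have h2 : p₂ = [] := List.length_eq_zero_iff.mp (by omega)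
    rw [hhead s₁ a p₁ hp₁ this, hhead s₂ a p₂ hp₂ h2]
  | succ n ih =>
    intro p₁ p₂ a hlen hp₁ hp₂
    by_cases hp₁nil : p₁ = []
    · have ha1 : s₁ = a := hhead s₁ a p₁ hp₁ hp₁nil
      by_cases hp₂nil : p₂ = []
      · rw [ha1, hhead s₂ a p₂ hp₂ hp₂nil]
      · exfalso
        have hstep := hlaststep s₂ a p₂ hp₂nil h₂S hp₂
        obtain ⟨t, hte, htB⟩ := h₁e
        exact entry_no_inner_in_edge N hI hsub hB h₁B (ha1 ▸ hte) htB _ hstep.2.2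
          (ha1 ▸ hstep.2.1)
    · by_cases hp₂nil : p₂ = []
      · exfalso
        have ha2 : s₂ = a := hhead s₂ a p₂ hp₂ hp₂nil
        have hstep := hlaststep s₁ a p₁ hp₁nil h₁S hp₁
        obtain ⟨t, hte, htB⟩ := h₂e
        exact entry_no_inner_in_edge N hI hsub hB h₂B (ha2 ▸ hte) htB _ hstep.2.2
          (ha2 ▸ hstep.2.1)
      · -- both nonempty: common predecessor z
        have hstep₁ := hlaststep s₁ a p₁ hp₁nil h₁S hp₁
        have hstep₂ := hlaststep s₂ a p₂ hp₂nil h₂S hp₂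
        set z₁ := p₁.getLast hp₁nil with hz₁
        set z₂ := p₂.getLast hp₂nil with hz₂
        have hz12 : z₁ = z₂ := by
          have := hI.in_edge_unique hstep₁.2.1 hstep₂.2.1 rfl
          exact congrArg Prod.fst this
        have hzB : z₁ ∈ B.verts := hstep₁.2.2
        have hzS : z₁ ∈ S'.verts := (S'.edges_sub _ hstep₁.2.1).1
        have hzX : z₁ ∉ X := (leaf_not_in_region N hB hzB).1
        have hpathz : pathB N S' B hI hsub z₁ = z₁ :: pathB N S' B hI hsub a := by
          rw [pathB_eq, if_pos ⟨hzB, hzS, hzX⟩, ← hstep₁.1]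
        have hsplit₁ : p₁ = p₁.dropLast ++ [z₁] := (List.dropLast_append_getLast hp₁nil).symm
        have hsplit₂ : p₂ = p₂.dropLast ++ [z₂] := (List.dropLast_append_getLast hp₂nil).symm
        have hd₁ : pathB N S' B hI hsub s₁ = p₁.dropLast ++ pathB N S' B hI hsub z₁ := by
          rw [hp₁, hpathz]
          conv_lhs => rw [hsplit₁]
          simp
        have hd₂ : pathB N S' B hI hsub s₂ = p₂.dropLast ++ pathB N S' B hI hsub z₁ := by
          have hpathz₂ : pathB N S' B hI hsub z₂ = z₂ :: pathB N S' B hI hsub a := by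
            rw [← hz12]; exact hpathz
          rw [hp₂, hz12, hpathz₂]
          conv_lhs => rw [hsplit₂]
          simp
        have hl₁ : p₁.dropLast.length = p₁.length - 1 := List.length_dropLast
        have hl₂ : p₂.dropLast.length = p₂.length - 1 := List.length_dropLast
        have hlp₁ : 0 < p₁.length := List.length_pos_iff.mpr hp₁nil
        have hlp₂ : 0 < p₂.length := List.length_pos_iff.mpr hp₂nil
        exact ih p₁.dropLast p₂.dropLast z₁ (by omega) hd₁ hd₂

end Development11
section Development12

open Finset

variable {V C : Type} {X : Finset V}

noncomputable def firstDiff (F' : V → C) : List V → Option (V × V)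
  | [] => none
  | [_] => none
  | a :: b :: t => if F' a ≠ F' b then some (a, b) else firstDiff F' (b :: t)

lemma firstDiff_spec (F' : V → C) : ∀ (l : List V) (x y : V),
    firstDiff F' l = some (x, y) → x ∈ l ∧ F' x ≠ F' y ∧
      ∀ (R : V → V → Prop), l.Chain' R → R x y := by
  intro l
  induction l with
  | nil => intro x y h; simp [firstDiff] at h
  | cons a t ih =>
    intro x y h
    cases t with
    | nil => simp [firstDiff] at h
    | cons b t' =>
      rw [firstDiff] at h
      split at h
      · rename_i hne
        simp only [Option.some.injEq, Prod.mk.injEq] at h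
        obtain ⟨rfl, rfl⟩ := h
        exact ⟨List.mem_cons_self, hne, fun R hch => (List.isChain_cons_cons.mp hch).1⟩
      · obtain ⟨hmem, hne, hR⟩ := ih x y h
        exact ⟨List.mem_cons_of_mem _ hmem, hne,
          fun R hch => hR R (List.isChain_cons_cons.mp hch).2⟩

lemma firstDiff_some (F' : V → C) : ∀ (l : List V) (hne : l ≠ []),
    F' (l.head hne) ≠ F' (l.getLast hne) → ∃ xy, firstDiff F' l = some xy := by
  intro l
  induction l with
  | nil => intro hne; exact absurd rfl hne
  | cons a t ih =>
    intro hne hd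
    cases t with
    | nil => simp at hd
    | cons b t' =>
      by_cases hab : F' a ≠ F' b
      · exact ⟨(a, b), by rw [firstDiff, if_pos hab]⟩
      · push_neg at hab
        rw [firstDiff, if_neg (by simpa using hab)]
        refine ih (List.cons_ne_nil b t') ?_
        have h1 : (a :: b :: t').head hne = a := rfl
        have h2 : (a :: b :: t').getLast hne = (b :: t').getLast (List.cons_ne_nil b t') :=
          List.getLast_cons _
        rw [h1, h2] at hd
        have h3 : (b :: t').head (List.cons_ne_nil b t') = b := rfl
        rw [h3, ← hab]
        exact hd

noncomputable def cBv (N : PhyloNet V X) (B : Dgraph V) : V :=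
  if h : (N.blobChildren B).Nonempty then h.choose else N.root

lemma cBv_mem {N : PhyloNet V X} {B : Dgraph V} (h : (N.blobChildren B).Nonempty) :
    cBv N B ∈ N.blobChildren B := by
  rw [cBv, dif_pos h]
  exact h.choose_spec

/-- deficits of a non-informative region are paid by `S'`-changes inside the region -/
lemma per_region_deficit (N : PhyloNet V X) {S' B : Dgraph V} (hI : TreeInv X N.root S')
    (hsub : S'.IsSubgraph N.G) (hB : IsRegion N B) (F' : V → C)
    (hsame : SameOnChildren N B F') :
    (N.G.edges.filter (fun d => d.2 ∈ B.verts ∧ d.1 ∉ B.verts ∧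
        F' d.2 ≠ F' (cBv N B))).card ≤
    (S'.edges.filter (fun d => d.1 ∈ B.verts ∧ F' d.1 ≠ F' d.2)).card := by
  have hmain : ∀ d ∈ N.G.edges.filter (fun d => d.2 ∈ B.verts ∧ d.1 ∉ B.verts ∧
      F' d.2 ≠ F' (cBv N B)), ∃ x y,
      firstDiff F' (pathB N S' B hI hsub d.2) = some (x, y) ∧
      (x, y) ∈ S'.edges.filter (fun d => d.1 ∈ B.verts ∧ F' d.1 ≠ F' d.2) ∧
      x ∈ pathB N S' B hI hsub d.2 := by
    intro d hd
    obtain ⟨hdN, hs, ht, hF⟩ := Finset.mem_filter.mp hd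
    obtain ⟨hdS', _⟩ := entry_edge_props N hI hsub hB hdN hs ht
    have hsS : d.2 ∈ S'.verts := (S'.edges_sub _ hdS').2
    set L := pathB N S' B hI hsub d.2 with hL
    have hLne : L ≠ [] := pathB_ne_nil N S' B hI hsub d.2
    obtain ⟨hch, hmem, hlast⟩ := pathB_props N S' B hI hsub hB (descCard N d.2) d.2
      le_rfl hsS
    set w := L.getLast hLne with hw
    have hwlast : L.getLast? = some w := List.getLast?_eq_getLast hLne
    obtain ⟨hwB, hwS⟩ := hlast w hwlast
    -- head of L is d.2
    have hheadL : L.head hLne = d.2 := by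
      have h1 := pathB_head N S' B hI hsub d.2
      rw [← hL, List.head?_eq_head hLne] at h1
      injection h1
    -- length ≥ 2 and the final step
    have hsX : d.2 ∉ X := (leaf_not_in_region N hB hs).1
    have hLeq : L = d.2 :: pathB N S' B hI hsub (nextS S' d.2) := by
      rw [hL, pathB_eq, if_pos ⟨hs, hsS, hsX⟩]
    have hdl_ne : L.dropLast ≠ [] := by
      rw [hLeq]
      obtain ⟨t2, ht2⟩ := pathB_cons N S' B hI hsub (nextS S' d.2)
      rw [ht2]
      simp
    have hsplitL : L = L.dropLast ++ [w] := (List.dropLast_append_getLast hLne).symm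
    have hstepzw : pStep S' B (L.dropLast.getLast hdl_ne) w := by
      have hch2 := hch
      rw [← hL, hsplitL] at hch2
      have hkey := (List.isChain_append.mp hch2).2.2
      refine hkey _ ?_ w ?_
      · simp [List.getLast?_eq_getLast hdl_ne, Option.mem_def]
      · simp [Option.mem_def]
    have hwchild : w ∈ N.blobChildren B :=
      mem_blobChildren N hstepzw.2.2 hwB (hsub.2 hstepzw.2.1)
    have hwc : F' w = F' (cBv N B) :=
      hsame w hwchild (cBv N B) (cBv_mem (region_child_nonempty N hB))
    have hdiff : F' (L.head hLne) ≠ F' (L.getLast hLne) := by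
      rw [hheadL, ← hw, hwc]
      exact hF
    obtain ⟨⟨x, y⟩, hxy⟩ := firstDiff_some F' L hLne hdiff
    obtain ⟨hxmem, hxyne, hR⟩ := firstDiff_spec F' L x y hxy
    have hstep := hR (pStep S' B) hch
    exact ⟨x, y, hxy, Finset.mem_filter.mpr ⟨hstep.2.1, hstep.2.2, hxyne⟩, hxmem⟩
  set φ : V × V → V × V := fun d =>
    (firstDiff F' (pathB N S' B hI hsub d.2)).getD d with hφ
  refine Finset.card_le_card_of_injOn φ ?_ ?_
  · intro d hd
    obtain ⟨x, y, h1, h2, _⟩ := hmain d hd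
    have : φ d = (x, y) := by rw [hφ]; simp [h1]
    rw [this]
    exact h2
  · intro d hd d' hd' heq
    obtain ⟨x, y, h1, h2, h3⟩ := hmain d hd
    obtain ⟨x', y', h1', h2', h3'⟩ := hmain d' hd'
    have hφd : φ d = (x, y) := by rw [hφ]; simp [h1]
    have hφd' : φ d' = (x', y') := by rw [hφ]; simp [h1']
    have hxy : (x, y) = ((x' : V), (y' : V)) := by rw [← hφd, ← hφd', heq]
    have hxx : x = x' := congrArg Prod.fst hxy
    -- suffix decompositions
    obtain ⟨hdN, hs, ht, _⟩ := Finset.mem_filter.mp hd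
    obtain ⟨hdN', hs', ht', _⟩ := Finset.mem_filter.mp hd'
    have hdS' := (entry_edge_props N hI hsub hB hdN hs ht).1
    have hdS'' := (entry_edge_props N hI hsub hB hdN' hs' ht').1
    obtain ⟨p, hp⟩ := pathB_suffix N S' B hI hsub (descCard N d.2) d.2 le_rfl x h3
    obtain ⟨p', hp'⟩ := pathB_suffix N S' B hI hsub (descCard N d'.2) d'.2 le_rfl x
      (hxx ▸ h3')
    have hheads : d.2 = d'.2 := by
      refine pathB_inj N hI hsub hB hs (S'.edges_sub _ hdS').2 ⟨d.1, ?_, ht⟩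
        hs' (S'.edges_sub _ hdS'').2 ⟨d'.1, ?_, ht'⟩ (p.length + p'.length) p p' x le_rfl hp hp'
      · rw [show (d.1, d.2) = d from rfl]; exact hdN
      · rw [show (d'.1, d'.2) = d' from rfl]; exact hdN'
    exact entry_head_unique N hI hsub hB hdN hs ht hdN' hs' ht' hheads

/-- slot counting within a region -/
lemma region_slot_count (N : PhyloNet V X) {S' B : Dgraph V} (hI : TreeInv X N.root S')
    (hsub : S'.IsSubgraph N.G) (hB : IsRegion N B) :
    ((B.edges \ S'.edges).filter
        (fun d => ¬ (d.1 ∉ S'.verts ∧ d = (d.1, nextN N d.1)))).card ≤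
      (B.edges \ S'.edges).card - (B.verts \ S'.verts).card := by
  classical
  set chosenSet := (B.verts \ S'.verts).image (fun v => (v, nextN N v)) with hchosen
  have hchsub : chosenSet ⊆ B.edges \ S'.edges := by
    intro d hd
    rw [hchosen, Finset.mem_image] at hd
    obtain ⟨v, hv, rfl⟩ := hd
    have hv' := Finset.mem_sdiff.mp hv
    have hvN : v ∈ N.G.verts := hB.1.1.1 hv'.1
    have hvX : v ∉ X := (leaf_not_in_region N hB hv'.1).1
    have hnext : (v, nextN N v) ∈ N.G.edges := nextN_spec (outDeg_pos N hvN hvX)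
    refine Finset.mem_sdiff.mpr ⟨?_, ?_⟩
    · exact edge_at_nonS'_in_region N hI hsub hB hv'.1 hv'.2 hnext (Or.inl rfl)
    · intro h
      exact hv'.2 (S'.edges_sub _ h).1
  have hchcard : chosenSet.card = (B.verts \ S'.verts).card := by
    rw [hchosen]
    apply Finset.card_image_of_injOn
    intro v _ v' _ h
    exact congrArg Prod.fst h
  have hfsub : (B.edges \ S'.edges).filter
      (fun d => ¬ (d.1 ∉ S'.verts ∧ d = (d.1, nextN N d.1))) ⊆
      (B.edges \ S'.edges) \ chosenSet := by
    intro d hd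
    have hd' := Finset.mem_filter.mp hd
    refine Finset.mem_sdiff.mpr ⟨hd'.1, ?_⟩
    intro hmem
    rw [hchosen, Finset.mem_image] at hmem
    obtain ⟨v, hv, rfl⟩ := hmem
    exact hd'.2 ⟨(Finset.mem_sdiff.mp hv).2, rfl⟩
  calc ((B.edges \ S'.edges).filter _).card
      ≤ ((B.edges \ S'.edges) \ chosenSet).card := Finset.card_le_card hfsub
    _ = (B.edges \ S'.edges).card - chosenSet.card := Finset.card_sdiff_of_subset hchsub
    _ = (B.edges \ S'.edges).card - (B.verts \ S'.verts).card := by rw [hchcard]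

end Development12
section Development13

open Finset

variable {V C : Type} {X : Finset V}

noncomputable def FdefF (N : PhyloNet V X) (S' : Dgraph V) (F' : V → C) (v : V) : C :=
  if h : ∃ B, IsRegion N B ∧ SameOnChildren N B F' ∧ v ∈ B.verts then
    F' (cBv N (Classical.choose h))
  else if v ∈ S'.verts then F' v else chainVal N S' F' v

lemma FdefF_ni {N : PhyloNet V X} {S' : Dgraph V} {F' : V → C} {B : Dgraph V} {v : V}
    (hB : IsRegion N B) (hsame : SameOnChildren N B F') (hv : v ∈ B.verts) :
    FdefF N S' F' v = F' (cBv N B) := by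
  have h : ∃ B, IsRegion N B ∧ SameOnChildren N B F' ∧ v ∈ B.verts := ⟨B, hB, hsame, hv⟩
  rw [FdefF, dif_pos h]
  have hspec := Classical.choose_spec h
  congr 2
  exact region_vert_unique N hspec.1 hB hspec.2.2 hv

lemma FdefF_S' {N : PhyloNet V X} {S' : Dgraph V} {F' : V → C} {v : V}
    (hni : ¬ ∃ B, IsRegion N B ∧ SameOnChildren N B F' ∧ v ∈ B.verts)
    (hv : v ∈ S'.verts) : FdefF N S' F' v = F' v := by
  rw [FdefF, dif_neg hni, if_pos hv]

lemma FdefF_chain {N : PhyloNet V X} {S' : Dgraph V} {F' : V → C} {v : V}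
    (hni : ¬ ∃ B, IsRegion N B ∧ SameOnChildren N B F' ∧ v ∈ B.verts)
    (hv : v ∉ S'.verts) : FdefF N S' F' v = chainVal N S' F' v := by
  rw [FdefF, dif_neg hni, if_neg hv]

/-- the per-edge ledger bound -/
lemma Fdef_edge_bound (N : PhyloNet V X) {S' : Dgraph V} (hI : TreeInv X N.root S')
    (hsub : S'.IsSubgraph N.G) (F' : V → C) {e : V × V} (he : e ∈ N.G.edges) :
    (if FdefF N S' F' e.1 ≠ FdefF N S' F' e.2 then 1 else 0) ≤
    (if e ∈ S'.edges ∧ ¬ (∃ B, IsRegion N B ∧ SameOnChildren N B F' ∧ e.1 ∈ B.verts)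
       then (if F' e.1 ≠ F' e.2 then 1 else 0) else 0) +
    ((if (∃ B, IsRegion N B ∧ SameOnChildren N B F' ∧ e.2 ∈ B.verts ∧ e.1 ∉ B.verts ∧
         F' e.2 ≠ F' (cBv N B)) then 1 else 0) +
    (if (e ∉ S'.edges ∧ (∃ B, IsRegion N B ∧ ¬ SameOnChildren N B F' ∧ e ∈ B.edges) ∧
         ¬ (e.1 ∉ S'.verts ∧ e = (e.1, nextN N e.1))) then 1 else 0)) := by
  have hLHS1 : (if FdefF N S' F' e.1 ≠ FdefF N S' F' e.2 then 1 else 0) ≤ 1 := by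
    split <;> omega
  by_cases heS : e ∈ S'.edges
  · have h1S : e.1 ∈ S'.verts := (S'.edges_sub e heS).1
    have h2S : e.2 ∈ S'.verts := (S'.edges_sub e heS).2
    by_cases hni1 : ∃ B, IsRegion N B ∧ SameOnChildren N B F' ∧ e.1 ∈ B.verts
    · obtain ⟨B, hBreg, hBsame, h1B⟩ := hni1
      have hF1 : FdefF N S' F' e.1 = F' (cBv N B) := FdefF_ni hBreg hBsame h1B
      by_cases h2B : e.2 ∈ B.verts
      · have hF2 : FdefF N S' F' e.2 = F' (cBv N B) := FdefF_ni hBreg hBsame h2B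
        rw [hF1, hF2]
        simp
      · have hchild : e.2 ∈ N.blobChildren B := mem_blobChildren N h1B h2B he
        have hF2eq : F' e.2 = F' (cBv N B) :=
          hBsame e.2 hchild _ (cBv_mem (region_child_nonempty N hBreg))
        by_cases hni2 : ∃ B', IsRegion N B' ∧ SameOnChildren N B' F' ∧ e.2 ∈ B'.verts
        · obtain ⟨B', hB'reg, hB'same, h2B'⟩ := hni2
          have hF2 : FdefF N S' F' e.2 = F' (cBv N B') := FdefF_ni hB'reg hB'same h2B'
          have h1B' : e.1 ∉ B'.verts := by
            intro h
            exact h2B (region_vert_unique N hB'reg hBreg h h1B ▸ h2B')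
          by_cases hchange : F' e.2 = F' (cBv N B')
          · rw [hF1, hF2, ← hF2eq, ← hchange]
            simp
          · have hD : (∃ B, IsRegion N B ∧ SameOnChildren N B F' ∧ e.2 ∈ B.verts ∧
                e.1 ∉ B.verts ∧ F' e.2 ≠ F' (cBv N B)) := ⟨B', hB'reg, hB'same, h2B', h1B', hchange⟩
            rw [if_pos hD]
            omega
        · have hF2 : FdefF N S' F' e.2 = F' e.2 := FdefF_S' hni2 h2S
          rw [hF1, hF2, hF2eq]
          simp
    · have hbase : (e ∈ S'.edges ∧ ¬ (∃ B, IsRegion N B ∧ SameOnChildren N B F' ∧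
          e.1 ∈ B.verts)) := ⟨heS, hni1⟩
      rw [if_pos hbase]
      have hF1 : FdefF N S' F' e.1 = F' e.1 := FdefF_S' hni1 h1S
      by_cases hni2 : ∃ B', IsRegion N B' ∧ SameOnChildren N B' F' ∧ e.2 ∈ B'.verts
      · obtain ⟨B', hB'reg, hB'same, h2B'⟩ := hni2
        have hF2 : FdefF N S' F' e.2 = F' (cBv N B') := FdefF_ni hB'reg hB'same h2B'
        have h1B' : e.1 ∉ B'.verts := fun h => hni1 ⟨B', hB'reg, hB'same, h⟩
        by_cases hchange : F' e.2 = F' (cBv N B')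
        · rw [hF1, hF2, ← hchange]
          omega
        · have hD : (∃ B, IsRegion N B ∧ SameOnChildren N B F' ∧ e.2 ∈ B.verts ∧
              e.1 ∉ B.verts ∧ F' e.2 ≠ F' (cBv N B)) := ⟨B', hB'reg, hB'same, h2B', h1B', hchange⟩
          rw [if_pos hD]
          omega
      · have hF2 : FdefF N S' F' e.2 = F' e.2 := FdefF_S' hni2 h2S
        rw [hF1, hF2]
        omega
  · obtain ⟨Br, hBrreg, heBr⟩ := edge_in_region_of_not_S' N hI hsub he heS
    have h1Br : e.1 ∈ Br.verts := (Br.edges_sub e heBr).1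
    have h2Br : e.2 ∈ Br.verts := (Br.edges_sub e heBr).2
    by_cases hsame : SameOnChildren N Br F'
    · have hF1 : FdefF N S' F' e.1 = F' (cBv N Br) := FdefF_ni hBrreg hsame h1Br
      have hF2 : FdefF N S' F' e.2 = F' (cBv N Br) := FdefF_ni hBrreg hsame h2Br
      rw [hF1, hF2]
      simp
    · have hni1 : ¬ ∃ B, IsRegion N B ∧ SameOnChildren N B F' ∧ e.1 ∈ B.verts := by
        rintro ⟨B, hB, hBs, h1B⟩
        exact hsame (region_vert_unique N hB hBrreg h1B h1Br ▸ hBs)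
      have hni2 : ¬ ∃ B, IsRegion N B ∧ SameOnChildren N B F' ∧ e.2 ∈ B.verts := by
        rintro ⟨B, hB, hBs, h2B⟩
        exact hsame (region_vert_unique N hB hBrreg h2B h2Br ▸ hBs)
      by_cases hch : e.1 ∉ S'.verts ∧ e = (e.1, nextN N e.1)
      · -- the chosen edge: zero cost
        have hnext : nextN N e.1 = e.2 := (congrArg Prod.snd hch.2).symm
        have hex : ∃ w, (e.1, w) ∈ N.G.edges := ⟨e.2, he⟩
        have hF1 : FdefF N S' F' e.1 = chainVal N S' F' e.1 := FdefF_chain hni1 hch.1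
        have hstep : chainVal N S' F' e.1 = chainVal N S' F' e.2 := by
          rw [chainVal_step hch.1 hex, hnext]
        have hF2 : FdefF N S' F' e.2 = chainVal N S' F' e.2 := by
          by_cases h2S : e.2 ∈ S'.verts
          · rw [FdefF_S' hni2 h2S, chainVal_mem h2S]
          · exact FdefF_chain hni2 h2S
        rw [hF1, hF2, hstep]
        simp
      · have hS : (e ∉ S'.edges ∧ (∃ B, IsRegion N B ∧ ¬ SameOnChildren N B F' ∧
            e ∈ B.edges) ∧ ¬ (e.1 ∉ S'.verts ∧ e = (e.1, nextN N e.1))) :=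
          ⟨heS, ⟨Br, hBrreg, hsame, heBr⟩, hch⟩
        rw [if_pos hS]
        omega

end Development13
section Development14

open Finset

variable {V C : Type} {X : Finset V}

lemma base_defc_sum (N : PhyloNet V X) {S' : Dgraph V} (hI : TreeInv X N.root S')
    (hsub : S'.IsSubgraph N.G) (F' : V → C) :
    (∑ e ∈ N.G.edges, if e ∈ S'.edges ∧ ¬ (∃ B, IsRegion N B ∧ SameOnChildren N B F' ∧
        e.1 ∈ B.verts) then (if F' e.1 ≠ F' e.2 then 1 else 0) else 0) +
    (∑ e ∈ N.G.edges, if (∃ B, IsRegion N B ∧ SameOnChildren N B F' ∧ e.2 ∈ B.verts ∧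
        e.1 ∉ B.verts ∧ F' e.2 ≠ F' (cBv N B)) then 1 else 0) ≤ ch F' S' := by
  classical
  -- base sum over the S'-edges with non-recoloured tail
  have hEfilter : N.G.edges.filter (fun e => e ∈ S'.edges ∧
      ¬ (∃ B, IsRegion N B ∧ SameOnChildren N B F' ∧ e.1 ∈ B.verts))
      = S'.edges.filter (fun e => ¬ (∃ B, IsRegion N B ∧ SameOnChildren N B F' ∧
          e.1 ∈ B.verts)) := by
    ext e
    simp only [Finset.mem_filter]
    constructor
    · rintro ⟨_, h1, h2⟩; exact ⟨h1, h2⟩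
    · rintro ⟨h1, h2⟩; exact ⟨hsub.2 h1, h1, h2⟩
  have hbase : (∑ e ∈ N.G.edges, if e ∈ S'.edges ∧ ¬ (∃ B, IsRegion N B ∧
      SameOnChildren N B F' ∧ e.1 ∈ B.verts) then (if F' e.1 ≠ F' e.2 then 1 else 0) else 0)
      = ∑ e ∈ S'.edges.filter (fun e => ¬ (∃ B, IsRegion N B ∧ SameOnChildren N B F' ∧
          e.1 ∈ B.verts)), (if F' e.1 ≠ F' e.2 then 1 else 0) := by
    rw [← Finset.sum_filter, hEfilter]
  -- deficit sum : a cardinality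
  have hdefc : (∑ e ∈ N.G.edges, if (∃ B, IsRegion N B ∧ SameOnChildren N B F' ∧
      e.2 ∈ B.verts ∧ e.1 ∉ B.verts ∧ F' e.2 ≠ F' (cBv N B)) then 1 else 0)
      = (N.G.edges.filter (fun e => ∃ B, IsRegion N B ∧ SameOnChildren N B F' ∧
          e.2 ∈ B.verts ∧ e.1 ∉ B.verts ∧ F' e.2 ≠ F' (cBv N B))).card :=
    (Finset.card_filter _ _).symm
  -- the deficit edges, partitioned by (non-informative) regions
  have hDeq : N.G.edges.filter (fun e => ∃ B, IsRegion N B ∧ SameOnChildren N B F' ∧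
      e.2 ∈ B.verts ∧ e.1 ∉ B.verts ∧ F' e.2 ≠ F' (cBv N B)) =
      ((regionsF N).filter (fun B => SameOnChildren N B F')).biUnion
        (fun B => N.G.edges.filter (fun d => d.2 ∈ B.verts ∧ d.1 ∉ B.verts ∧
          F' d.2 ≠ F' (cBv N B))) := by
    ext d
    simp only [Finset.mem_filter, Finset.mem_biUnion]
    constructor
    · rintro ⟨hdN, B, hB, hs, h2, h1, hne⟩
      exact ⟨B, ⟨mem_regionsF.mpr hB, hs⟩, hdN, h2, h1, hne⟩
    · rintro ⟨B, ⟨hBmem, hs⟩, hdN, h2, h1, hne⟩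
      exact ⟨hdN, B, mem_regionsF.mp hBmem, hs, h2, h1, hne⟩
  have hdisj1 : ∀ B ∈ (regionsF N).filter (fun B => SameOnChildren N B F'), ∀ B' ∈
      (regionsF N).filter (fun B => SameOnChildren N B F'), B ≠ B' →
      Disjoint (N.G.edges.filter (fun d => d.2 ∈ B.verts ∧ d.1 ∉ B.verts ∧
        F' d.2 ≠ F' (cBv N B)))
        (N.G.edges.filter (fun d => d.2 ∈ B'.verts ∧ d.1 ∉ B'.verts ∧
        F' d.2 ≠ F' (cBv N B'))) := by
    intro B hB B' hB' hne
    rw [Finset.disjoint_left]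
    intro d h1 h2
    have h1' := Finset.mem_filter.mp h1
    have h2' := Finset.mem_filter.mp h2
    exact hne (region_vert_unique N (mem_regionsF.mp (Finset.mem_filter.mp hB).1)
      (mem_regionsF.mp (Finset.mem_filter.mp hB').1) h1'.2.1 h2'.2.1)
  have hdisj2 : ∀ B ∈ (regionsF N).filter (fun B => SameOnChildren N B F'), ∀ B' ∈
      (regionsF N).filter (fun B => SameOnChildren N B F'), B ≠ B' →
      Disjoint (S'.edges.filter (fun d => d.1 ∈ B.verts ∧ F' d.1 ≠ F' d.2))
        (S'.edges.filter (fun d => d.1 ∈ B'.verts ∧ F' d.1 ≠ F' d.2)) := by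
    intro B hB B' hB' hne
    rw [Finset.disjoint_left]
    intro d h1 h2
    have h1' := Finset.mem_filter.mp h1
    have h2' := Finset.mem_filter.mp h2
    exact hne (region_vert_unique N (mem_regionsF.mp (Finset.mem_filter.mp hB).1)
      (mem_regionsF.mp (Finset.mem_filter.mp hB').1) h1'.2.1 h2'.2.1)
  have hcard1 : (N.G.edges.filter (fun e => ∃ B, IsRegion N B ∧ SameOnChildren N B F' ∧
      e.2 ∈ B.verts ∧ e.1 ∉ B.verts ∧ F' e.2 ≠ F' (cBv N B))).card ≤
      (S'.edges.filter (fun e => (∃ B, IsRegion N B ∧ SameOnChildren N B F' ∧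
        e.1 ∈ B.verts) ∧ F' e.1 ≠ F' e.2)).card := by
    rw [hDeq, Finset.card_biUnion hdisj1]
    have hstep1 : ∑ B ∈ (regionsF N).filter (fun B => SameOnChildren N B F'),
        (N.G.edges.filter (fun d => d.2 ∈ B.verts ∧ d.1 ∉ B.verts ∧
          F' d.2 ≠ F' (cBv N B))).card ≤
        ∑ B ∈ (regionsF N).filter (fun B => SameOnChildren N B F'),
        (S'.edges.filter (fun d => d.1 ∈ B.verts ∧ F' d.1 ≠ F' d.2)).card := by
      refine Finset.sum_le_sum ?_
      intro B hB
      have hB' := Finset.mem_filter.mp hB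
      exact per_region_deficit N hI hsub (mem_regionsF.mp hB'.1) F' hB'.2
    refine hstep1.trans ?_
    rw [← Finset.card_biUnion hdisj2]
    refine Finset.card_le_card ?_
    rw [Finset.biUnion_subset]
    intro B hB
    intro d hd
    have hd' := Finset.mem_filter.mp hd
    have hB' := Finset.mem_filter.mp hB
    exact Finset.mem_filter.mpr ⟨hd'.1,
      ⟨B, mem_regionsF.mp hB'.1, hB'.2, hd'.2.1⟩, hd'.2.2⟩
  -- now combine
  have hsplitS := Finset.sum_filter_add_sum_filter_not S'.edges
    (fun e => ∃ B, IsRegion N B ∧ SameOnChildren N B F' ∧ e.1 ∈ B.verts)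
    (fun e => if F' e.1 ≠ F' e.2 then 1 else 0)
  have hfreed : (∑ e ∈ S'.edges.filter (fun e => ∃ B, IsRegion N B ∧
      SameOnChildren N B F' ∧ e.1 ∈ B.verts), if F' e.1 ≠ F' e.2 then 1 else 0)
      = (S'.edges.filter (fun e => (∃ B, IsRegion N B ∧ SameOnChildren N B F' ∧
        e.1 ∈ B.verts) ∧ F' e.1 ≠ F' e.2)).card := by
    rw [← Finset.filter_filter, Finset.card_filter]
  have hchS' : ch F' S' = ∑ e ∈ S'.edges, (if F' e.1 ≠ F' e.2 then 1 else 0) :=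
    ch_eq_sum F' S'
  omega

lemma slot_sum (N : PhyloNet V X) {S' : Dgraph V} (hI : TreeInv X N.root S')
    (hsub : S'.IsSubgraph N.G) {k : ℕ} (hlev : N.IsLevel k) (F' : V → C) :
    (∑ e ∈ N.G.edges, if (e ∉ S'.edges ∧ (∃ B, IsRegion N B ∧ ¬ SameOnChildren N B F' ∧
        e ∈ B.edges) ∧ ¬ (e.1 ∉ S'.verts ∧ e = (e.1, nextN N e.1))) then 1 else 0) ≤
      k * ((regionsF N).filter (fun B => ¬ SameOnChildren N B F')).card := by
  classical
  have hslot : (∑ e ∈ N.G.edges, if (e ∉ S'.edges ∧ (∃ B, IsRegion N B ∧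
      ¬ SameOnChildren N B F' ∧ e ∈ B.edges) ∧ ¬ (e.1 ∉ S'.verts ∧
      e = (e.1, nextN N e.1))) then 1 else 0)
      = (N.G.edges.filter (fun e => e ∉ S'.edges ∧ (∃ B, IsRegion N B ∧
        ¬ SameOnChildren N B F' ∧ e ∈ B.edges) ∧ ¬ (e.1 ∉ S'.verts ∧
        e = (e.1, nextN N e.1)))).card := (Finset.card_filter _ _).symm
  have hSeq : N.G.edges.filter (fun e => e ∉ S'.edges ∧ (∃ B, IsRegion N B ∧
      ¬ SameOnChildren N B F' ∧ e ∈ B.edges) ∧ ¬ (e.1 ∉ S'.verts ∧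
      e = (e.1, nextN N e.1))) =
      ((regionsF N).filter (fun B => ¬ SameOnChildren N B F')).biUnion
        (fun B => (B.edges \ S'.edges).filter
          (fun d => ¬ (d.1 ∉ S'.verts ∧ d = (d.1, nextN N d.1)))) := by
    ext d
    simp only [Finset.mem_filter, Finset.mem_biUnion, Finset.mem_sdiff]
    constructor
    · rintro ⟨hdN, hdS, ⟨B, hB, hnsame, hdB⟩, hnc⟩
      exact ⟨B, ⟨mem_regionsF.mpr hB, hnsame⟩, ⟨hdB, hdS⟩, hnc⟩
    · rintro ⟨B, ⟨hBmem, hnsame⟩, ⟨hdB, hdS⟩, hnc⟩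
      have hB := mem_regionsF.mp hBmem
      exact ⟨hB.1.1.2 hdB, hdS, ⟨B, hB, hnsame, hdB⟩, hnc⟩
  have hdisj : ∀ B ∈ (regionsF N).filter (fun B => ¬ SameOnChildren N B F'), ∀ B' ∈
      (regionsF N).filter (fun B => ¬ SameOnChildren N B F'), B ≠ B' →
      Disjoint ((B.edges \ S'.edges).filter
          (fun d => ¬ (d.1 ∉ S'.verts ∧ d = (d.1, nextN N d.1))))
        ((B'.edges \ S'.edges).filter
          (fun d => ¬ (d.1 ∉ S'.verts ∧ d = (d.1, nextN N d.1)))) := by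
    intro B hB B' hB' hne
    rw [Finset.disjoint_left]
    intro d h1 h2
    have h1' := (Finset.mem_sdiff.mp (Finset.mem_filter.mp h1).1).1
    have h2' := (Finset.mem_sdiff.mp (Finset.mem_filter.mp h2).1).1
    have hd := regions_edge_disjoint N (mem_regionsF.mp (Finset.mem_filter.mp hB).1)
      (mem_regionsF.mp (Finset.mem_filter.mp hB').1) hne
    rw [Finset.disjoint_left] at hd
    exact hd h1' h2'
  rw [hslot, hSeq, Finset.card_biUnion hdisj]
  -- bound each region's slots
  have hstep : ∑ B ∈ (regionsF N).filter (fun B => ¬ SameOnChildren N B F'),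
      ((B.edges \ S'.edges).filter
        (fun d => ¬ (d.1 ∉ S'.verts ∧ d = (d.1, nextN N d.1)))).card ≤
      ∑ B ∈ (regionsF N).filter (fun B => ¬ SameOnChildren N B F'),
      ((B.edges \ S'.edges).card - (B.verts \ S'.verts).card) := by
    refine Finset.sum_le_sum ?_
    intro B hB
    exact region_slot_count N hI hsub (mem_regionsF.mp (Finset.mem_filter.mp hB).1)
  refine hstep.trans ?_
  -- Euler counting
  have hEul : ∑ B ∈ (regionsF N).filter (fun B => ¬ SameOnChildren N B F'),
      ((B.edges \ S'.edges).card - (B.verts \ S'.verts).card) ≤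
      ∑ B ∈ (regionsF N).filter (fun B => ¬ SameOnChildren N B F'),
      (B.verts.filter (fun v => N.IsRetic v)).card := by
    have hper : ∀ B ∈ regionsF N, (B.verts \ S'.verts).card +
        (B.verts.filter (fun v => N.IsRetic v)).card ≤ (B.edges \ S'.edges).card :=
      fun B hB => region_lower N hI hsub (mem_regionsF.mp hB)
    -- split sums over Same / not Same
    have hsplitE := Finset.sum_filter_add_sum_filter_not (regionsF N)
      (fun B => ¬ SameOnChildren N B F') (fun B => (B.edges \ S'.edges).card)
    have hsplitV := Finset.sum_filter_add_sum_filter_not (regionsF N)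
      (fun B => ¬ SameOnChildren N B F') (fun B => (B.verts \ S'.verts).card)
    have hsplitR := Finset.sum_filter_add_sum_filter_not (regionsF N)
      (fun B => ¬ SameOnChildren N B F') (fun B => (B.verts.filter (fun v => N.IsRetic v)).card)
    have hE := sum_regions_edges N hI hsub
    have hV := sum_regions_verts N hI hsub
    have hR := sum_regions_retics N
    have hEtot : (N.G.edges \ S'.edges).card = N.G.edges.card - S'.edges.card :=
      Finset.card_sdiff_of_subset hsub.2
    have hVtot : (N.G.verts \ S'.verts).card = N.G.verts.card - S'.verts.card :=
      Finset.card_sdiff_of_subset hsub.1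
    have hEleN : S'.edges.card ≤ N.G.edges.card := Finset.card_le_card hsub.2
    have hVleN : S'.verts.card ≤ N.G.verts.card := Finset.card_le_card hsub.1
    have hNc := network_count N
    have hS'c := hI.count
    -- sums over "noninformative" side satisfy the per-region bound
    have hNIbound : ∑ B ∈ (regionsF N).filter (fun B => ¬¬ SameOnChildren N B F'),
        ((B.verts \ S'.verts).card + (B.verts.filter (fun v => N.IsRetic v)).card) ≤
        ∑ B ∈ (regionsF N).filter (fun B => ¬¬ SameOnChildren N B F'),
        (B.edges \ S'.edges).card := by
      refine Finset.sum_le_sum ?_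
      intro B hB
      exact hper B (Finset.mem_filter.mp hB).1
    rw [Finset.sum_add_distrib] at hNIbound
    -- the informative side: rewrite the truncated subtraction
    have hsubadd : ∑ B ∈ (regionsF N).filter (fun B => ¬ SameOnChildren N B F'),
        ((B.edges \ S'.edges).card - (B.verts \ S'.verts).card) +
        ∑ B ∈ (regionsF N).filter (fun B => ¬ SameOnChildren N B F'),
        (B.verts \ S'.verts).card =
        ∑ B ∈ (regionsF N).filter (fun B => ¬ SameOnChildren N B F'),
        (B.edges \ S'.edges).card := by
      rw [← Finset.sum_add_distrib]
      refine Finset.sum_congr rfl ?_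
      intro B hB
      have h := hper B (Finset.mem_filter.mp hB).1
      omega
    omega
  refine hEul.trans ?_
  -- each region has at most k reticulations
  have hklev : ∀ B ∈ (regionsF N).filter (fun B => ¬ SameOnChildren N B F'),
      (B.verts.filter (fun v => N.IsRetic v)).card ≤ k := by
    intro B hB
    exact hlev B (mem_regionsF.mp (Finset.mem_filter.mp hB).1).1
  calc ∑ B ∈ (regionsF N).filter (fun B => ¬ SameOnChildren N B F'),
      (B.verts.filter (fun v => N.IsRetic v)).card
      ≤ ((regionsF N).filter (fun B => ¬ SameOnChildren N B F')).card • k :=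
        Finset.sum_le_card_nsmul _ _ k hklev
    _ = k * ((regionsF N).filter (fun B => ¬ SameOnChildren N B F')).card := by
        rw [smul_eq_mul, Nat.mul_comm]

end Development14
/-- **Corollary.** Let `f` be a character on `X`, let `N` be a rooted binary level-`k`
phylogenetic network on `X`, and let `S`, `S'` be embeddings of two phylogenetic `X`-trees
displayed by `N` with `PS_sw(f,N) = PS(f,S')`. Then
`PS(f,S) ≤ PS(f,S') + k·b(f,N,S')`. -/
theorem cor_PS_bound {V C : Type} {X : Finset V}
    (N : PhyloNet V X) (k : ℕ) (hlev : N.IsLevel k)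
    (f : V → C) (hf : IsCharacter X f)
    (T T' : PhyloNet V X) (hT : T.IsTreeNet) (hT' : T'.IsTreeNet)
    (S S' : Dgraph V) (hS : N.IsEmbedding T S) (hS' : N.IsEmbedding T' S')
    (hsw : PSsw N f = PS X f S') :
    PS X f S ≤ PS X f S' + k * blobScore N f S' := by
  classical
  obtain ⟨F', hext, hchF', hblob⟩ := blobScore_attained N f S'
  have hI : TreeInv X N.root S' := emb_treeInv hT' hS'
  have hsub : S'.IsSubgraph N.G := hS'.1
  -- the modified assignment extends `f`
  have hFext : IsExtension X f (FdefF N S' F') := by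
    intro x hx
    have hni : ¬ ∃ B, IsRegion N B ∧ SameOnChildren N B F' ∧ x ∈ B.verts := by
      rintro ⟨B, hB, _, hxB⟩
      exact (leaf_not_in_region N hB hxB).1 hx
    rw [FdefF_S' hni (hI.X_sub hx)]
    exact hext x hx
  -- the informative regions are counted by the blob score
  have hINF : ((regionsF N).filter (fun B => ¬ SameOnChildren N B F')).card ≤
      blobScore N f S' := by
    rw [← hblob]
    unfold infBlobCount
    have htfin : {B : Dgraph V | N.IsBlob B ∧ ¬ SameOnChildren N B F'}.Finite := by
      have himg : (fun B : Dgraph V => (B.verts, B.edges)) ''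
          {B : Dgraph V | N.IsBlob B ∧ ¬ SameOnChildren N B F'} ⊆
          ↑(N.G.verts.powerset ×ˢ N.G.edges.powerset) := by
        rintro p ⟨B, hB, rfl⟩
        simp only [Finset.coe_product, Set.mem_prod, Finset.mem_coe, Finset.mem_powerset]
        exact ⟨hB.1.1.1.1, hB.1.1.1.2⟩
      refine Set.Finite.of_finite_image
        (Set.Finite.subset (Finset.finite_toSet _) himg) ?_
      intro B _ B' _ h
      exact Dgraph.ext' (congrArg Prod.fst h) (congrArg Prod.snd h)
    have hsubt : ↑((regionsF N).filter (fun B => ¬ SameOnChildren N B F')) ⊆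
        {B : Dgraph V | N.IsBlob B ∧ ¬ SameOnChildren N B F'} := by
      intro B hB
      rw [Finset.mem_coe, Finset.mem_filter] at hB
      have hreg := mem_regionsF.mp hB.1
      exact ⟨⟨hreg.1, region_has_retic N hreg⟩, hB.2⟩
    calc ((regionsF N).filter (fun B => ¬ SameOnChildren N B F')).card
        = (↑((regionsF N).filter (fun B => ¬ SameOnChildren N B F')) :
            Set (Dgraph V)).ncard := (Set.ncard_coe_finset _).symm
      _ ≤ {B : Dgraph V | N.IsBlob B ∧ ¬ SameOnChildren N B F'}.ncard :=
          Set.ncard_le_ncard hsubt htfin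
  -- the global cost bound
  have hch : ch (FdefF N S' F') N.G ≤ ch F' S' + k * blobScore N f S' := by
    rw [ch_eq_sum]
    have hb := Finset.sum_le_sum (fun e he => Fdef_edge_bound N hI hsub F' (e := e) he)
    refine hb.trans ?_
    rw [Finset.sum_add_distrib, Finset.sum_add_distrib]
    have h1 := base_defc_sum N hI hsub F'
    have h2 := slot_sum N hI hsub hlev F'
    have h3 : k * ((regionsF N).filter (fun B => ¬ SameOnChildren N B F')).card ≤
        k * blobScore N f S' := Nat.mul_le_mul_left k hINF
    omega
  calc PS X f S ≤ ch (FdefF N S' F') S := PS_le_ch f _ S hFext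
    _ ≤ ch (FdefF N S' F') N.G := ch_mono _ hS.1.2
    _ ≤ ch F' S' + k * blobScore N f S' := hch
    _ = PS X f S' + k * blobScore N f S' := by rw [hchF']

end
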